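/- arXiv:2603.07000 — 4 statements merged into one kernel-verified Lean document; each statement's English description precedes it below -/
import Mathlib

section
/- Let U be a 3-cuttable unrooted binary phylogenetic network on X, let T be an unrooted binary phylogenetic X-tree displayed by U, and let φ be an embedding of T in U. Then for every edge {u,w} of T, the path φ({u,w}) in U is entangled. -/
/-- A graph with an explicit vertex set inside an ambient type `V`. -/
structure Net (V : Type) where
  verts : Set V
  graph : SimpleGraph V
  support : ∀ ⦃a b : V⦄, graph.Adj a b → a ∈ verts ∧ b ∈ verts

namespace Net

variable {V : Type}

/-- The degree of a vertex. -/
noncomputable def deg (N : Net V) (v : V) : ℕ := (N.graph.neighborSet v).ncard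

/-- `N` is connected (as a graph on its vertex set `N.verts`). -/
def ConnectedOn (N : Net V) : Prop :=
  N.verts.Nonempty ∧ ∀ a ∈ N.verts, ∀ b ∈ N.verts, N.graph.Reachable a b

/-- The set of leaves (degree-1 vertices). -/
def leaves (N : Net V) : Set V := {v | v ∈ N.verts ∧ N.deg v = 1}

/-- `N` is an unrooted binary phylogenetic network on the (label) set `X`:
it is simple (automatic for `SimpleGraph`), connected, every vertex has degree 1 or 3,
and the degree-1 vertices are exactly the elements of `X` (we identify each leaf with
its label). -/
def IsUBPN (N : Net V) (X : Set V) : Prop :=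
  N.ConnectedOn ∧ (∀ v ∈ N.verts, N.deg v = 1 ∨ N.deg v = 3) ∧ N.leaves = X

/-- Deleting a set of edges. -/
def deleteEdges (N : Net V) (D : Set (Sym2 V)) : Net V where
  verts := N.verts
  graph := N.graph.deleteEdges D
  support := fun _ _ h => N.support ((SimpleGraph.deleteEdges_adj.mp h).1)

/-- A cut-edge: an edge whose deletion disconnects the network. -/
def IsCutEdge (N : Net V) (e : Sym2 V) : Prop :=
  e ∈ N.graph.edgeSet ∧ ¬ (N.deleteEdges {e}).ConnectedOn

/-- `N` is `q`-cuttable: every cycle contains a path of at least `q` vertices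
each of which is incident to a cut-edge. -/
def QCuttable (N : Net V) (q : ℕ) : Prop :=
  ∀ ⦃r : V⦄ (C : N.graph.Walk r r), C.IsCycle →
    ∃ (x y : V) (P : N.graph.Walk x y), P.IsPath ∧ q ≤ P.support.length ∧
      (∀ v ∈ P.support, v ∈ C.support) ∧ (∀ e ∈ P.edges, e ∈ C.edges) ∧
      ∀ v ∈ P.support, ∃ e, N.IsCutEdge e ∧ v ∈ e

end Net
section Aux

open SimpleGraph

variable {V : Type}

namespace Net

lemma mem_support_of_mem_edge {G : SimpleGraph V} {x y w : V} (W : G.Walk x y) {e : Sym2 V}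
    (he : e ∈ W.edges) (hw : w ∈ e) : w ∈ W.support := by
  induction e using Sym2.ind with
  | _ α β =>
    rcases Sym2.mem_iff.mp hw with rfl | rfl
    · exact W.fst_mem_support_of_mem_edges he
    · exact W.snd_mem_support_of_mem_edges he

/-- From any walk in `G`, after deleting one edge `s(p,q)` the start can still reach
the end, or can reach `p` or `q`. -/
lemma reach_del {G : SimpleGraph V} (p q : V) {v t : V} (W : G.Walk v t) :
    (G.deleteEdges {s(p,q)}).Reachable v t ∨ (G.deleteEdges {s(p,q)}).Reachable v p ∨
      (G.deleteEdges {s(p,q)}).Reachable v q := by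
  induction W with
  | nil => exact Or.inl (Reachable.refl _)
  | @cons v u t hadj W ih =>
    by_cases he : s(v, u) = s(p, q)
    · have hv : v = p ∨ v = q := by
        rcases Sym2.eq_iff.mp he with ⟨rfl, rfl⟩ | ⟨rfl, rfl⟩
        · exact Or.inl rfl
        · exact Or.inr rfl
      rcases hv with rfl | rfl
      · exact Or.inr (Or.inl (Reachable.refl _))
      · exact Or.inr (Or.inr (Reachable.refl _))
    · have hadj' : (G.deleteEdges {s(p,q)}).Adj v u :=
        SimpleGraph.deleteEdges_adj.mpr ⟨hadj, by simpa using he⟩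
      rcases ih with h1 | h1 | h1
      · exact Or.inl (hadj'.reachable.trans h1)
      · exact Or.inr (Or.inl (hadj'.reachable.trans h1))
      · exact Or.inr (Or.inr (hadj'.reachable.trans h1))

/-- The two endpoints of a cut-edge are not reachable from each other after deleting it. -/
lemma cut_not_reachable {U : Net V} (hc : U.ConnectedOn) {p q : V}
    (hcut : U.IsCutEdge s(p, q)) :
    ¬ (U.graph.deleteEdges {s(p,q)}).Reachable p q := by
  intro hr
  apply hcut.2
  have hpq : U.graph.Adj p q := (SimpleGraph.mem_edgeSet U.graph).mp hcut.1
  have hp : p ∈ U.verts := (U.support hpq).1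
  have key : ∀ c ∈ U.verts, (U.graph.deleteEdges {s(p,q)}).Reachable c p := by
    intro c hc'
    obtain ⟨W⟩ := hc.2 c hc' p hp
    rcases reach_del p q W with h1 | h1 | h1
    exacts [h1, h1, h1.trans hr.symm]
  exact ⟨hc.1, fun a ha b hb => (key a ha).trans (key b hb).symm⟩

/-- In a path, two edges both containing the final vertex are equal. -/
lemma end_edge_unique {G : SimpleGraph V} {x y : V} (W : G.Walk x y) (hWp : W.IsPath)
    {e1 e2 : Sym2 V} (h1 : e1 ∈ W.edges) (h2 : e2 ∈ W.edges)
    (hy1 : y ∈ e1) (hy2 : y ∈ e2) : e1 = e2 := by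
  induction W with
  | nil => simp at h1
  | @cons x u y hadj W ih =>
    rw [SimpleGraph.Walk.cons_isPath_iff] at hWp
    rw [SimpleGraph.Walk.edges_cons, List.mem_cons] at h1 h2
    have key : ∀ {e e' : Sym2 V}, e = s(x,u) → y ∈ e → e' ∈ W.edges → y ∈ e' → False := by
      intro e e' he hye he' hye'
      subst he
      have hyW : y ∈ W.support := mem_support_of_mem_edge W he' hye'
      rcases Sym2.mem_iff.mp hye with rfl | rfl
      · exact hWp.2 hyW
      · have : W = SimpleGraph.Walk.nil := SimpleGraph.Walk.isPath_iff_eq_nil.mp hWp.1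
        rw [this] at he'; simp at he'
    rcases h1 with h1 | h1 <;> rcases h2 with h2 | h2
    · rw [h1, h2]
    · exact absurd (key h1 hy1 h2 hy2) (fun hf => hf)
    · exact absurd (key h2 hy2 h1 hy1) (fun hf => hf)
    · exact ih hWp.1 h1 h2 hy1 hy2

/-- A nontrivial walk has an edge at its first vertex. -/
lemma exists_head_edge {G : SimpleGraph V} {x y : V} (W : G.Walk x y) (hxy : x ≠ y) :
    ∃ u, G.Adj x u ∧ s(x,u) ∈ W.edges := by
  cases W with
  | nil => exact absurd rfl hxy
  | cons hadj W => exact ⟨_, hadj, by simp⟩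

/-- An internal vertex of a path is incident to two distinct edges of the path. -/
lemma internal_two_edges {G : SimpleGraph V} [DecidableEq V] {x y w : V} (W : G.Walk x y)
    (hWp : W.IsPath) (hw : w ∈ W.support) (hwx : w ≠ x) (hwy : w ≠ y) :
    ∃ u1 u2, u1 ≠ u2 ∧ G.Adj w u1 ∧ G.Adj w u2 ∧ s(w,u1) ∈ W.edges ∧ s(w,u2) ∈ W.edges := by
  obtain ⟨u1, hadj1, hmem1⟩ := exists_head_edge (W.takeUntil w hw).reverse (Ne.symm hwx ∘ Eq.symm) 
  obtain ⟨u2, hadj2, hmem2⟩ := exists_head_edge (W.dropUntil w hw) hwy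
  have hmem1' : s(w,u1) ∈ (W.takeUntil w hw).edges := by
    rwa [SimpleGraph.Walk.edges_reverse, List.mem_reverse] at hmem1
  have hu1 : u1 ∈ (W.takeUntil w hw).support :=
    mem_support_of_mem_edge _ hmem1' (Sym2.mem_mk_right w u1)
  have hu2 : u2 ∈ (W.dropUntil w hw).support :=
    mem_support_of_mem_edge _ hmem2 (Sym2.mem_mk_right w u2)
  have hdis : List.Disjoint (W.takeUntil w hw).support (W.dropUntil w hw).support.tail := by
    have hnd := hWp.support_nodup
    rw [← SimpleGraph.Walk.take_spec W hw, SimpleGraph.Walk.support_append] at hnd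
    exact List.disjoint_of_nodup_append hnd
  have hu2tail : u2 ∈ (W.dropUntil w hw).support.tail := by
    have hc := (W.dropUntil w hw).support_eq_cons
    rw [hc, List.mem_cons] at hu2
    rcases hu2 with h | h
    · exact absurd h hadj2.ne'
    · exact h
  have hne : u1 ≠ u2 := fun hf => hdis hu1 (hf ▸ hu2tail)
  exact ⟨u1, u2, hne, hadj1, hadj2, W.edges_takeUntil_subset hw hmem1',
    W.edges_dropUntil_subset hw hmem2⟩

end Net

end Aux
section Aux2

open SimpleGraph

variable {V : Type}

namespace Net

/-- **Key lemma.** In a 3-cuttable UBPN, each side of any cut-edge contains a leaf. -/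
lemma side_has_leaf [Fintype V] {U : Net V} {X : Set V} (hU : U.IsUBPN X)
    (h3 : U.QCuttable 3) :
    ∀ n : ℕ, ∀ p q : V, U.IsCutEdge s(p, q) →
      {v | v ∈ U.verts ∧ (U.graph.deleteEdges {s(p,q)}).Reachable v q}.ncard ≤ n →
      ∃ x ∈ U.leaves, (U.graph.deleteEdges {s(p,q)}).Reachable x q := by
  classical
  intro n
  induction n using Nat.strong_induction_on with
  | _ n IH =>
  intro p q hcut hcard
  by_cases hleaf : ∃ x ∈ U.leaves, (U.graph.deleteEdges {s(p,q)}).Reachable x q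
  · exact hleaf
  exfalso
  push_neg at hleaf
  set G' := U.graph.deleteEdges {s(p,q)} with hG'def
  have hadjpq : U.graph.Adj p q := (SimpleGraph.mem_edgeSet U.graph).mp hcut.1
  have hqv : q ∈ U.verts := (U.support hadjpq).2
  have hpv : p ∈ U.verts := (U.support hadjpq).1
  have hnr : ¬ G'.Reachable p q := cut_not_reachable hU.1 hcut
  set S := {v | v ∈ U.verts ∧ G'.Reachable v q} with hSdef
  have hqS : q ∈ S := ⟨hqv, Reachable.refl q⟩
  have hpS : p ∉ S := fun hmem => hnr hmem.2
  have hSleaf : ∀ x ∈ S, x ∉ U.leaves := fun x hx hxl => hleaf x hxl hx.2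
  have hdeg3 : ∀ v ∈ S, U.deg v = 3 := by
    intro v hv
    rcases hU.2.1 v hv.1 with h1 | h1
    · exact absurd ⟨hv.1, h1⟩ (hSleaf v hv)
    · exact h1
  -- every member of `S` has two distinct `G'`-neighbors
  have hnbr : ∀ v ∈ S, ∃ n1 n2 : V, n1 ≠ n2 ∧ G'.Adj v n1 ∧ G'.Adj v n2 := by
    intro v hv
    obtain ⟨m1, m2, m3, h12, h13, h23, hmeq⟩ := Set.ncard_eq_three.mp (hdeg3 v hv)
    have hvp : v ≠ p := fun hf => hpS (hf ▸ hv)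
    have key : ∀ m, m ∈ U.graph.neighborSet v → m ≠ p → G'.Adj v m := by
      intro m hm hmp
      refine SimpleGraph.deleteEdges_adj.mpr ⟨hm, ?_⟩
      rw [Set.mem_singleton_iff, Sym2.eq_iff]
      rintro (⟨rfl, rfl⟩ | ⟨rfl, rfl⟩)
      · exact hvp rfl
      · exact hmp rfl
    have hm1 : m1 ∈ U.graph.neighborSet v := by rw [hmeq]; simp
    have hm2 : m2 ∈ U.graph.neighborSet v := by rw [hmeq]; simp
    have hm3 : m3 ∈ U.graph.neighborSet v := by rw [hmeq]; simp
    by_cases h1p : m1 = p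
    · exact ⟨m2, m3, h23, key m2 hm2 (fun hf => h12 (h1p ▸ hf ▸ rfl)),
        key m3 hm3 (fun hf => h13 (h1p ▸ hf ▸ rfl))⟩
    by_cases h2p : m2 = p
    · exact ⟨m1, m3, h13, key m1 hm1 h1p,
        key m3 hm3 (fun hf => h23 (h2p ▸ hf ▸ rfl))⟩
    · exact ⟨m1, m2, h12, key m1 hm1 h1p, key m2 hm2 h2p⟩
  have hGadjS : ∀ {v m : V}, v ∈ S → G'.Adj v m → m ∈ S := by
    intro v m hv hadj
    exact ⟨(U.support (SimpleGraph.deleteEdges_adj.mp hadj).1).2,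
      hadj.symm.reachable.trans hv.2⟩
  -- a longest path inside `S`
  set A : Set ℕ := {m | ∃ (x y : V) (W : G'.Walk x y), W.IsPath ∧
      (∀ v ∈ W.support, v ∈ S) ∧ W.length = m} with hAdef
  have hA0 : 0 ∈ A := ⟨q, q, SimpleGraph.Walk.nil, SimpleGraph.Walk.IsPath.nil,
    by intro v hv; simp at hv; exact hv ▸ hqS, rfl⟩
  have hAbdd : BddAbove A := by
    refine ⟨Fintype.card V, ?_⟩
    rintro m ⟨x, y, W, hWp, -, rfl⟩
    exact hWp.length_lt.le
  obtain ⟨x, y, W, hWp, hWS, hWlen⟩ := Nat.sSup_mem ⟨0, hA0⟩ hAbdd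
  have hymem : y ∈ S := hWS y W.end_mem_support
  obtain ⟨n1, n2, hn12, hadjn1, hadjn2⟩ := hnbr y hymem
  obtain ⟨c, hcadj, hce⟩ : ∃ c, G'.Adj y c ∧ s(y,c) ∉ W.edges := by
    by_cases hmem : s(y,n1) ∈ W.edges
    · refine ⟨n2, hadjn2, fun hmem2 => ?_⟩
      exact hn12 (Sym2.congr_right.mp
        (end_edge_unique W hWp hmem hmem2 (Sym2.mem_mk_left y n1) (Sym2.mem_mk_left y n2)))
    · exact ⟨n1, hadjn1, hmem⟩
  have hcS : c ∈ S := hGadjS hymem hcadj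
  by_cases hcsup : c ∈ W.support
  · -- we get a cycle inside `S`
    have hWdp : (W.dropUntil c hcsup).IsPath := hWp.dropUntil hcsup
    have hWde : s(y,c) ∉ (W.dropUntil c hcsup).edges :=
      fun hmem => hce (W.edges_dropUntil_subset hcsup hmem)
    have hcyc : (SimpleGraph.Walk.cons hcadj (W.dropUntil c hcsup)).IsCycle :=
      (SimpleGraph.Walk.cons_isCycle_iff _ hcadj).mpr ⟨hWdp, hWde⟩
    have hsubE : ∀ e ∈ (SimpleGraph.Walk.cons hcadj (W.dropUntil c hcsup)).edges,
        e ∈ U.graph.edgeSet := by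
      intro e he
      have := SimpleGraph.Walk.edges_subset_edgeSet _ he
      rw [SimpleGraph.edgeSet_deleteEdges] at this
      exact this.1
    set C := (SimpleGraph.Walk.cons hcadj (W.dropUntil c hcsup)).transfer U.graph hsubE
      with hCdef
    have hCc : C.IsCycle := hcyc.transfer hsubE
    have hCS : ∀ v ∈ C.support, v ∈ S := by
      intro v hv
      rw [hCdef, SimpleGraph.Walk.support_transfer, SimpleGraph.Walk.support_cons,
        List.mem_cons] at hv
      rcases hv with rfl | hv
      · exact hymem
      · exact hWS v (W.support_dropUntil_subset hcsup hv)
    obtain ⟨x3, y3, P3, hP3p, hP3len, hP3supp, -, hP3cut⟩ := h3 C hCc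
    obtain ⟨v2, hv2supp, hv2q⟩ : ∃ v2 ∈ P3.support, v2 ≠ q := by
      obtain ⟨s0, s1, L2, hsupp⟩ : ∃ s0 s1 L2, P3.support = s0 :: s1 :: L2 := by
        obtain ⟨s0, L, hs⟩ := List.exists_cons_of_ne_nil
          (show P3.support ≠ [] by intro hf; rw [hf] at hP3len; simp at hP3len)
        obtain ⟨s1, L2, hL⟩ := List.exists_cons_of_ne_nil
          (show L ≠ [] by intro hf; rw [hs, hf] at hP3len; simp at hP3len)
        exact ⟨s0, s1, L2, by rw [hs, hL]⟩
      have hnd := hP3p.support_nodup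
      rw [hsupp] at hnd
      have h01 : s0 ≠ s1 := by intro hf; subst hf; simp at hnd
      by_cases h0q : s0 = q
      · exact ⟨s1, by rw [hsupp]; simp, fun hf => h01 (by rw [h0q, hf])⟩
      · exact ⟨s0, by rw [hsupp]; simp, h0q⟩
    have hv2S : v2 ∈ S := hCS v2 (hP3supp v2 hv2supp)
    obtain ⟨f, hfcut, hv2f⟩ := hP3cut v2 hv2supp
    obtain ⟨u, rfl⟩ : ∃ u, f = s(v2, u) := ⟨Sym2.Mem.other hv2f, (Sym2.other_spec hv2f).symm⟩
    have hadj2u : U.graph.Adj v2 u := (SimpleGraph.mem_edgeSet U.graph).mp hfcut.1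
    have hv2p : v2 ≠ p := fun hf => hpS (hf ▸ hv2S)
    have hfg : s(v2,u) ≠ s(p,q) := by
      intro hf
      rcases Sym2.eq_iff.mp hf with ⟨rfl, rfl⟩ | ⟨rfl, rfl⟩
      · exact hv2p rfl
      · exact hv2q rfl
    have hadj2u' : G'.Adj v2 u := SimpleGraph.deleteEdges_adj.mpr ⟨hadj2u, by simpa using hfg⟩
    have huS : u ∈ S := hGadjS hv2S hadj2u'
    set G'' := U.graph.deleteEdges {s(v2,u)} with hG''def
    have hnrf : ¬ G''.Reachable v2 u := cut_not_reachable hU.1 hfcut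
    have hadjpq'' : G''.Adj p q := by
      refine SimpleGraph.deleteEdges_adj.mpr ⟨hadjpq, ?_⟩
      simpa using (Ne.symm hfg)
    have hqside : G''.Reachable q v2 ∨ G''.Reachable q u := by
      obtain ⟨Wq⟩ := hU.1.2 q hqv v2 hv2S.1
      rcases reach_del v2 u Wq with h1 | h1 | h1
      exacts [Or.inl h1, Or.inl h1, Or.inr h1]
    rcases hqside with hcase | hcase
    · -- the `u`-side of `f` is strictly inside `S`
      have hsub2 : {v | v ∈ U.verts ∧ G''.Reachable v u} ⊆ S \ {v2} := by
        rintro v ⟨hvv, hvr⟩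
        obtain ⟨Wv⟩ := id hvr
        have hgW : s(p,q) ∉ Wv.edges := by
          intro hmem
          have hpsupp : p ∈ Wv.support := Wv.fst_mem_support_of_mem_edges hmem
          have h1 : G''.Reachable p u := ⟨Wv.dropUntil p hpsupp⟩
          exact hnrf (hcase.symm.trans (hadjpq''.symm.reachable.trans h1))
        have hWvE : ∀ e ∈ Wv.edges, e ∈ G'.edgeSet := by
          intro e he
          have h1 := SimpleGraph.Walk.edges_subset_edgeSet _ he
          rw [SimpleGraph.edgeSet_deleteEdges] at h1
          rw [hG'def, SimpleGraph.edgeSet_deleteEdges]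
          exact ⟨h1.1, fun hmem => hgW (by rwa [Set.mem_singleton_iff.mp hmem] at he)⟩
        have hreach : G'.Reachable v u := ⟨Wv.transfer G' hWvE⟩
        refine ⟨⟨hvv, hreach.trans huS.2⟩, ?_⟩
        intro hv2eq
        rw [Set.mem_singleton_iff] at hv2eq
        subst hv2eq
        exact hnrf hvr
      have hlt : {v | v ∈ U.verts ∧ G''.Reachable v u}.ncard < n := by
        calc {v | v ∈ U.verts ∧ G''.Reachable v u}.ncard
            ≤ (S \ {v2}).ncard := Set.ncard_le_ncard hsub2 (Set.toFinite _)
          _ < S.ncard := Set.ncard_diff_singleton_lt_of_mem hv2S (Set.toFinite _)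
          _ ≤ n := hcard
      obtain ⟨xl, hxl, hxr⟩ := IH _ hlt v2 u hfcut le_rfl
      exact hleaf xl hxl (hsub2 ⟨hxl.1, hxr⟩).1.2
    · -- the `v2`-side of `f` is strictly inside `S`
      have hfcut' : U.IsCutEdge s(u, v2) := by rwa [Sym2.eq_swap]
      have hsub2 : {v | v ∈ U.verts ∧ G''.Reachable v v2} ⊆ S \ {u} := by
        rintro v ⟨hvv, hvr⟩
        obtain ⟨Wv⟩ := id hvr
        have hgW : s(p,q) ∉ Wv.edges := by
          intro hmem
          have hpsupp : p ∈ Wv.support := Wv.fst_mem_support_of_mem_edges hmem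
          have h1 : G''.Reachable p v2 := ⟨Wv.dropUntil p hpsupp⟩
          exact hnrf ((hcase.symm.trans (hadjpq''.symm.reachable.trans h1)).symm)
        have hWvE : ∀ e ∈ Wv.edges, e ∈ G'.edgeSet := by
          intro e he
          have h1 := SimpleGraph.Walk.edges_subset_edgeSet _ he
          rw [SimpleGraph.edgeSet_deleteEdges] at h1
          rw [hG'def, SimpleGraph.edgeSet_deleteEdges]
          exact ⟨h1.1, fun hmem => hgW (by rwa [Set.mem_singleton_iff.mp hmem] at he)⟩
        have hreach : G'.Reachable v v2 := ⟨Wv.transfer G' hWvE⟩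
        refine ⟨⟨hvv, hreach.trans hv2S.2⟩, ?_⟩
        intro hueq
        rw [Set.mem_singleton_iff] at hueq
        subst hueq
        exact hnrf hvr.symm
      have hlt : {v | v ∈ U.verts ∧ G''.Reachable v v2}.ncard < n := by
        calc {v | v ∈ U.verts ∧ G''.Reachable v v2}.ncard
            ≤ (S \ {u}).ncard := Set.ncard_le_ncard hsub2 (Set.toFinite _)
          _ < S.ncard := Set.ncard_diff_singleton_lt_of_mem huS (Set.toFinite _)
          _ ≤ n := hcard
      have hgoal := IH _ hlt u v2 hfcut'
      rw [Sym2.eq_swap] at hgoal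
      obtain ⟨xl, hxl, hxr⟩ := hgoal le_rfl
      exact hleaf xl hxl (hsub2 ⟨hxl.1, hxr⟩).1.2
  · -- otherwise the longest path can be extended: contradiction
    have hcons : (SimpleGraph.Walk.cons hcadj.symm W.reverse).IsPath := by
      rw [SimpleGraph.Walk.cons_isPath_iff]
      refine ⟨hWp.reverse, ?_⟩
      rwa [SimpleGraph.Walk.support_reverse, List.mem_reverse]
    have hmemA : (W.length + 1) ∈ A := by
      refine ⟨c, x, SimpleGraph.Walk.cons hcadj.symm W.reverse, hcons, ?_, by simp⟩
      intro v hv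
      rw [SimpleGraph.Walk.support_cons, List.mem_cons] at hv
      rcases hv with rfl | hv
      · exact hcS
      · rw [SimpleGraph.Walk.support_reverse, List.mem_reverse] at hv
        exact hWS v hv
    have := le_csSup hAbdd hmemA
    omega

end Net

end Aux2

namespace Net

variable {V : Type}

/-- `T` is an unrooted binary phylogenetic `X`-tree: an unrooted binary phylogenetic
network on `X` with no cycles. -/
def IsTree (T : Net V) (X : Set V) : Prop := T.IsUBPN X ∧ T.graph.IsAcyclic

/-- `(fv, fe)` is an embedding of the tree `T` in the network `U` (both with label set
`X`): `fv` maps vertices of `T` to vertices of `U` fixing the leaves, injectively, and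
`fe` maps each edge of `T` to a path in `U` between the images of its endpoints, the
paths of distinct edges being pairwise edge-disjoint. -/
def IsEmbedding (T U : Net V) (X : Set V) (fv : V → V)
    (fe : ∀ ⦃a b : V⦄, T.graph.Adj a b → U.graph.Walk (fv a) (fv b)) : Prop :=
  (∀ a ∈ T.verts, fv a ∈ U.verts) ∧
  (∀ x ∈ X, fv x = x) ∧
  (∀ a ∈ T.verts, ∀ b ∈ T.verts, fv a = fv b → a = b) ∧
  (∀ ⦃a b : V⦄ (h : T.graph.Adj a b), (fe h).IsPath) ∧
  (∀ ⦃a b c d : V⦄ (h : T.graph.Adj a b) (h' : T.graph.Adj c d), s(a, b) ≠ s(c, d) →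
    ∀ e ∈ (fe h).edges, e ∉ (fe h').edges)

/-- `U` displays `T`: there is an embedding of `T` in `U` (equivalently, a subgraph of
`U` is a subdivision of `T`). -/
def Displays (U T : Net V) (X : Set V) : Prop :=
  ∃ (fv : V → V) (fe : ∀ ⦃a b : V⦄, T.graph.Adj a b → U.graph.Walk (fv a) (fv b)),
    IsEmbedding T U X fv fe

end Net

namespace Net

variable {V : Type}

/-- A path `P` (from `x` to `y`) in `N` is entangled if none of its internal vertices is
incident to a cut-edge of `N` that is not an edge of `P`. -/
def Entangled (N : Net V) {x y : V} (P : N.graph.Walk x y) : Prop :=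
  ∀ w ∈ P.support, w ≠ x → w ≠ y → ∀ e, N.IsCutEdge e → w ∈ e → e ∈ P.edges

end Net

open Net

/-- Let `U` be a `3`-cuttable unrooted binary phylogenetic network on
`X`, let `T` be an unrooted binary phylogenetic `X`-tree displayed by `U`, and let
`(fv, fe)` be an embedding of `T` in `U`.  Then for every edge of `T` the corresponding
path in `U` is entangled. -/
theorem embedding_paths_entangled {V : Type} [Fintype V]
    (U T : Net V) (X : Set V) (hU : U.IsUBPN X) (h3 : U.QCuttable 3)
    (hT : T.IsTree X) (hd : U.Displays T X)
    (fv : V → V) (fe : ∀ ⦃a b : V⦄, T.graph.Adj a b → U.graph.Walk (fv a) (fv b))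
    (hemb : IsEmbedding T U X fv fe) :
    ∀ ⦃a b : V⦄ (h : T.graph.Adj a b), U.Entangled (fe h) := by
  classical
  obtain ⟨hev, hfix, hinj, hpath, hdisj⟩ := hemb
  intro a b h
  intro w hw hwx hwy e hcut hwe
  by_contra hePnot
  obtain ⟨z, rfl⟩ : ∃ z, e = s(w, z) := ⟨Sym2.Mem.other hwe, (Sym2.other_spec hwe).symm⟩
  have hadjwz : U.graph.Adj w z := (SimpleGraph.mem_edgeSet U.graph).mp hcut.1
  -- a leaf on the `z`-side of `e`
  obtain ⟨x, hxleaf, hxreach⟩ := Net.side_has_leaf hU h3 _ w z hcut le_rfl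
  have hxX : x ∈ X := hU.2.2 ▸ hxleaf
  have hxT : x ∈ T.verts := by
    have : x ∈ T.leaves := hT.1.2.2 ▸ hxX
    exact this.1
  have haT : a ∈ T.verts := (T.support h).1
  have hbT : b ∈ T.verts := (T.support h).2
  -- mapping walks of T to walks of U
  have mapWalk : ∀ (s0 t0 : V) (Wt : T.graph.Walk s0 t0),
      ∃ W : U.graph.Walk (fv s0) (fv t0), ∀ e' ∈ W.edges,
        e' ∈ (fe h).edges ∨
          ∃ (c d : V) (h' : T.graph.Adj c d), s(c,d) ≠ s(a,b) ∧ e' ∈ (fe h').edges := by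
    intro s0 t0 Wt
    induction Wt with
    | nil => exact ⟨SimpleGraph.Walk.nil, by simp⟩
    | @cons v u' t0 hst W' ih =>
      obtain ⟨W2, hW2⟩ := ih
      by_cases hcase : s(v, u') = s(a, b)
      · rcases Sym2.eq_iff.mp hcase with ⟨rfl, rfl⟩ | ⟨rfl, rfl⟩
        · refine ⟨(fe h).append W2, ?_⟩
          intro e' he'
          rw [SimpleGraph.Walk.edges_append, List.mem_append] at he'
          rcases he' with h1 | h1
          · exact Or.inl h1
          · exact hW2 e' h1
        · refine ⟨(fe h).reverse.append W2, ?_⟩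
          intro e' he'
          rw [SimpleGraph.Walk.edges_append, List.mem_append] at he'
          rcases he' with h1 | h1
          · rw [SimpleGraph.Walk.edges_reverse, List.mem_reverse] at h1
            exact Or.inl h1
          · exact hW2 e' h1
      · refine ⟨(fe hst).append W2, ?_⟩
        intro e' he'
        rw [SimpleGraph.Walk.edges_append, List.mem_append] at he'
        rcases he' with h1 | h1
        · exact Or.inr ⟨v, u', hst, hcase, h1⟩
        · exact hW2 e' h1
  obtain ⟨Wt⟩ := hT.1.1.2 a haT x hxT
  obtain ⟨W2, hW2⟩ := mapWalk a x Wt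
  have hfvx : fv x = x := hfix x hxX
  -- full walk from `w` to `x` inside the embedding
  set Wfull := ((fe h).takeUntil w hw).reverse.append (W2.copy rfl hfvx) with hWfull
  have hein : s(w,z) ∈ Wfull.edges := by
    by_contra hnin
    have hreach : (U.graph.deleteEdges {s(w,z)}).Reachable w x :=
      ⟨Wfull.toDeleteEdges _ (by
        intro e' he' hmem
        rw [Set.mem_singleton_iff] at hmem
        exact hnin (hmem ▸ he'))⟩
    exact Net.cut_not_reachable hU.1 hcut (hreach.trans hxreach)
  rw [hWfull, SimpleGraph.Walk.edges_append, List.mem_append] at hein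
  obtain ⟨c, d, h', hne', heQ⟩ :
      ∃ (c d : V) (h' : T.graph.Adj c d), s(c,d) ≠ s(a,b) ∧ s(w,z) ∈ (fe h').edges := by
    rcases hein with h1 | h1
    · exfalso
      apply hePnot
      rw [SimpleGraph.Walk.edges_reverse, List.mem_reverse] at h1
      exact (fe h).edges_takeUntil_subset hw h1
    · rw [SimpleGraph.Walk.edges_copy] at h1
      rcases hW2 _ h1 with h2 | h2
      · exact absurd h2 hePnot
      · exact h2
  -- the two edges of `fe h` at the internal vertex `w`
  obtain ⟨u1, u2, h12, hadj1, hadj2, he1, he2⟩ :=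
    Net.internal_two_edges (fe h) (hpath h) hw hwx hwy
  have hz1 : z ≠ u1 := fun hf => hePnot (by rw [hf]; exact he1)
  have hz2 : z ≠ u2 := fun hf => hePnot (by rw [hf]; exact he2)
  have hwv : w ∈ U.verts := (U.support hadjwz).1
  have hsubnbr : ({u1, u2, z} : Set V) ⊆ U.graph.neighborSet w := by
    intro m hm
    rcases hm with rfl | rfl | rfl
    · exact hadj1
    · exact hadj2
    · exact hadjwz
  have hcard3 : ({u1, u2, z} : Set V).ncard = 3 :=
    Set.ncard_eq_three.mpr ⟨u1, u2, z, h12, fun hf => hz1 hf.symm, fun hf => hz2 hf.symm, rfl⟩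
  have hdegw : U.deg w = 3 := by
    rcases hU.2.1 w hwv with h1 | h1
    · exfalso
      have h3le : 3 ≤ U.deg w := by
        rw [← hcard3]
        exact Set.ncard_le_ncard hsubnbr (Set.toFinite _)
      omega
    · exact h1
  have hnbreq : ({u1, u2, z} : Set V) = U.graph.neighborSet w :=
    Set.eq_of_subset_of_ncard_le hsubnbr (by rw [hcard3]; exact le_of_eq hdegw)
      (Set.toFinite _)
  have hedgew : ∀ m, U.graph.Adj w m → m = u1 ∨ m = u2 ∨ m = z := by
    intro m hm
    have : m ∈ ({u1, u2, z} : Set V) := by rw [hnbreq]; exact hm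
    simpa using this
  -- `w` must be an endpoint of `fe h'`
  have hwQ : w ∈ (fe h').support := (fe h').fst_mem_support_of_mem_edges heQ
  have hend : w = fv c ∨ w = fv d := by
    by_contra hcon
    push_neg at hcon
    obtain ⟨t1, t2, ht12, hta1, hta2, hte1, hte2⟩ :=
      Net.internal_two_edges (fe h') (hpath h') hwQ hcon.1 hcon.2
    have key : ∀ t', U.graph.Adj w t' → s(w,t') ∈ (fe h').edges → t' = z := by
      intro t' hadjt hmemt
      rcases hedgew t' hadjt with rfl | rfl | rfl
      · exact absurd hmemt (hdisj h h' (fun hf => hne' hf.symm) _ he1)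
      · exact absurd hmemt (hdisj h h' (fun hf => hne' hf.symm) _ he2)
      · rfl
    exact ht12 ((key t1 hta1 hte1).trans (key t2 hta2 hte2).symm)
  obtain ⟨c', hwc', hc'T⟩ : ∃ c', w = fv c' ∧ c' ∈ T.verts := by
    rcases hend with h1 | h1
    · exact ⟨c, h1, (T.support h').1⟩
    · exact ⟨d, h1, (T.support h').2⟩
  have hc'a : c' ≠ a := fun hf => hwx (by rw [hwc', hf])
  have hc'b : c' ≠ b := fun hf => hwy (by rw [hwc', hf])
  -- every tree edge at `c'` embeds to a path starting with the edge `s(w,z)`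
  have keyc : ∀ m (hm : T.graph.Adj c' m), s(w, z) ∈ (fe hm).edges := by
    intro m hm
    have hmT : m ∈ T.verts := (T.support hm).2
    have hfvne : w ≠ fv m := by
      rw [hwc']
      intro hf
      exact hm.ne (hinj c' hc'T m hmT hf)
    obtain ⟨t', hadjt, hmemt⟩ := Net.exists_head_edge ((fe hm).copy hwc'.symm rfl) hfvne
    rw [SimpleGraph.Walk.edges_copy] at hmemt
    have hnecm : s(c', m) ≠ s(a, b) := by
      intro hf
      rcases Sym2.eq_iff.mp hf with ⟨rfl, rfl⟩ | ⟨rfl, rfl⟩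
      · exact hc'a rfl
      · exact hc'b rfl
    have ht'z : t' = z := by
      rcases hedgew t' hadjt with rfl | rfl | rfl
      · exact absurd hmemt (hdisj h hm (fun hf => hnecm hf.symm) _ he1)
      · exact absurd hmemt (hdisj h hm (fun hf => hnecm hf.symm) _ he2)
      · rfl
    rwa [ht'z] at hmemt
  -- hence `c'` has tree-degree 1
  have hdegc' : T.deg c' = 1 := by
    rcases hT.1.2.1 c' hc'T with h1 | h1
    · exact h1
    exfalso
    obtain ⟨m1, m2, m3, hm12, hm13, hm23, hmeq⟩ := Set.ncard_eq_three.mp h1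
    have hadjm1 : T.graph.Adj c' m1 := by
      have : m1 ∈ T.graph.neighborSet c' := by rw [hmeq]; simp
      exact this
    have hadjm2 : T.graph.Adj c' m2 := by
      have : m2 ∈ T.graph.neighborSet c' := by rw [hmeq]; simp
      exact this
    have hne12 : s(c', m1) ≠ s(c', m2) := fun hf => hm12 (Sym2.congr_right.mp hf)
    exact hdisj hadjm1 hadjm2 hne12 _ (keyc m1 hadjm1) (keyc m2 hadjm2)
  have hc'X : c' ∈ X := by
    rw [← hT.1.2.2]
    exact ⟨hc'T, hdegc'⟩
  have hwX : w ∈ X := by rw [hwc', hfix c' hc'X]; exact hc'X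
  have hwleaf : w ∈ U.leaves := by rw [hU.2.2]; exact hwX
  have : U.deg w = 1 := hwleaf.2
  omega
end

section
/- Let U be a simple 3-cuttable unrooted binary phylogenetic network, and let u and v be two vertices of U. Then there is at most one entangled path between u and v in U. -/
namespace Net

variable {V : Type}

/-- `N` is simple: every cut-edge of `N` is incident to a leaf. -/
def Simple (N : Net V) (X : Set V) : Prop :=
  ∀ e, N.IsCutEdge e → ∃ x ∈ X, x ∈ e

end Net


section Helpers

open SimpleGraph Walk

variable {V : Type} {G : SimpleGraph V}

lemma mem_support_of_mem_edges' {a u v : V} {p : G.Walk u v} {e : Sym2 V}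
    (he : e ∈ p.edges) (ha : a ∈ e) : a ∈ p.support := by
  induction e using Sym2.ind with
  | _ x y =>
    rw [Sym2.mem_iff] at ha
    rcases ha with rfl | rfl
    · exact p.fst_mem_support_of_mem_edges he
    · exact p.snd_mem_support_of_mem_edges he

lemma edge_at_start {a b : V} {p : G.Walk a b} (hp : p.IsPath) {e e' : Sym2 V}
    (he : e ∈ p.edges) (he' : e' ∈ p.edges) (ha : a ∈ e) (ha' : a ∈ e') : e = e' := by
  cases p with
  | nil => simp at he
  | @cons a c b hadj rest =>
    have hkey : ∀ {f : Sym2 V}, f ∈ (Walk.cons hadj rest).edges → a ∈ f → f = s(a, c) := by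
      intro f hf haf
      rw [Walk.edges_cons, List.mem_cons] at hf
      rcases hf with rfl | hf
      · rfl
      · exact absurd (mem_support_of_mem_edges' hf haf)
          ((Walk.cons_isPath_iff hadj rest).mp hp).2
    rw [hkey he ha, hkey he' ha']

lemma three_edges : ∀ {a b : V} (p : G.Walk a b), p.IsPath → ∀ {w : V}, w ≠ a → w ≠ b →
    ∀ {e₁ e₂ e₃ : Sym2 V}, e₁ ∈ p.edges → e₂ ∈ p.edges → e₃ ∈ p.edges →
    w ∈ e₁ → w ∈ e₂ → w ∈ e₃ → e₁ = e₂ ∨ e₁ = e₃ ∨ e₂ = e₃ := by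
  intro a b p
  induction p with
  | nil => intro _ w _ _ e₁ e₂ e₃ h1 _ _ _ _ _; simp at h1
  | @cons a c b hadj rest ih =>
    intro hp w hwa hwb e₁ e₂ e₃ h1 h2 h3 hw1 hw2 hw3
    rw [Walk.edges_cons, List.mem_cons] at h1 h2 h3
    by_cases hwc : w = c
    · subst hwc
      have k12 : e₁ ∈ rest.edges → e₂ ∈ rest.edges → e₁ = e₂ :=
        fun x y => edge_at_start hp.of_cons x y hw1 hw2
      have k13 : e₁ ∈ rest.edges → e₃ ∈ rest.edges → e₁ = e₃ :=
        fun x y => edge_at_start hp.of_cons x y hw1 hw3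
      have k23 : e₂ ∈ rest.edges → e₃ ∈ rest.edges → e₂ = e₃ :=
        fun x y => edge_at_start hp.of_cons x y hw2 hw3
      rcases h1 with h1 | h1 <;> rcases h2 with h2 | h2 <;> rcases h3 with h3 | h3 <;>
        simp_all
    · have hwn : w ∉ s(a, c) := by
        rw [Sym2.mem_iff]; push_neg; exact ⟨hwa, hwc⟩
      rcases h1 with rfl | h1; · exact absurd hw1 hwn
      rcases h2 with rfl | h2; · exact absurd hw2 hwn
      rcases h3 with rfl | h3; · exact absurd hw3 hwn
      exact ih hp.of_cons hwc hwb h1 h2 h3 hw1 hw2 hw3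

lemma two_edges : ∀ {a b : V} (p : G.Walk a b), p.IsPath → ∀ {w : V}, w ∈ p.support → w ≠ a → w ≠ b →
    ∃ e₁ e₂, e₁ ∈ p.edges ∧ e₂ ∈ p.edges ∧ e₁ ≠ e₂ ∧ w ∈ e₁ ∧ w ∈ e₂ := by
  intro a b p
  induction p with
  | nil => intro _ w hw hwa _; rw [Walk.support_nil, List.mem_singleton] at hw; exact absurd hw hwa
  | @cons a c b hadj rest ih =>
    intro hp w hw hwa hwb
    rw [Walk.support_cons, List.mem_cons] at hw
    rcases hw with rfl | hw
    · exact absurd rfl hwa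
    by_cases hwc : w = c
    · subst hwc
      cases rest with
      | nil => exact absurd rfl hwb
      | @cons _ d b' hadj' rest' =>
        refine ⟨s(a, w), s(w, d), ?_, ?_, ?_, ?_, ?_⟩
        · rw [Walk.edges_cons]; exact List.mem_cons_self
        · rw [Walk.edges_cons, Walk.edges_cons]
          exact List.mem_cons_of_mem _ List.mem_cons_self
        · intro h
          rw [Sym2.eq_iff] at h
          have had : a ≠ d := by
            intro h'
            subst h'
            exact ((Walk.cons_isPath_iff hadj _).mp hp).2
              (by rw [Walk.support_cons]; exact List.mem_cons_of_mem _ rest'.start_mem_support)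
          rcases h with ⟨h', _⟩ | ⟨h', _⟩
          · exact hadj.ne h'
          · exact had h'
        · rw [Sym2.mem_iff]; right; rfl
        · rw [Sym2.mem_iff]; left; rfl
    · obtain ⟨e₁, e₂, h1, h2, hne, hw1, hw2⟩ := ih hp.of_cons hw hwc hwb
      exact ⟨e₁, e₂, by rw [Walk.edges_cons]; exact List.mem_cons_of_mem _ h1,
        by rw [Walk.edges_cons]; exact List.mem_cons_of_mem _ h2, hne, hw1, hw2⟩

lemma pick3 {l : List V} (hn : l.Nodup) (hl : 3 ≤ l.length) (a b : V) :
    ∃ w ∈ l, w ≠ a ∧ w ≠ b := by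
  match l, hl with
  | c :: d :: e :: t, _ =>
    have hcd : c ≠ d := by simp at hn; tauto
    have hce : c ≠ e := by simp at hn; tauto
    have hde : d ≠ e := by simp at hn; tauto
    by_cases hca : c = a
    · subst hca
      by_cases hdb : d = b
      · subst hdb
        exact ⟨e, by simp, Ne.symm hce, Ne.symm hde⟩
      · exact ⟨d, by simp, Ne.symm hcd, hdb⟩
    · by_cases hcb : c = b
      · subst hcb
        by_cases hda : d = a
        · subst hda
          exact ⟨e, by simp, Ne.symm hde, Ne.symm hce⟩
        · exact ⟨d, by simp, hda, Ne.symm hcd⟩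
      · exact ⟨c, by simp, hca, hcb⟩

lemma first_hit : ∀ {x v : V} (p : G.Walk x v) (S : Set V), v ∈ S →
    ∃ (b : V) (pp : G.Walk x b), b ∈ S ∧ (∀ e ∈ pp.edges, e ∈ p.edges) ∧
      (∀ w ∈ pp.support, w ∈ p.support) ∧ (∀ w ∈ pp.support, w ≠ b → w ∉ S) ∧
      (p.IsPath → pp.IsPath) := by
  intro x v p
  induction p with
  | @nil u =>
    intro S hv
    refine ⟨u, Walk.nil, hv, by simp, by simp, ?_, fun _ => Walk.IsPath.nil⟩
    intro w hw hwb
    rw [Walk.support_nil, List.mem_singleton] at hw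
    exact absurd hw hwb
  | @cons x c v hadj rest ih =>
    intro S hv
    by_cases hx : x ∈ S
    · refine ⟨x, Walk.nil, hx, by simp, by simp, ?_, fun _ => Walk.IsPath.nil⟩
      intro w hw hwb
      rw [Walk.support_nil, List.mem_singleton] at hw
      exact absurd hw hwb
    · obtain ⟨b, pp, hbS, hE, hS, hNS, hPath⟩ := ih S hv
      refine ⟨b, Walk.cons hadj pp, hbS, ?_, ?_, ?_, ?_⟩
      · intro e he
        rw [Walk.edges_cons, List.mem_cons] at he ⊢
        rcases he with rfl | he
        · exact Or.inl rfl
        · exact Or.inr (hE e he)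
      · intro w hw
        rw [Walk.support_cons, List.mem_cons] at hw ⊢
        rcases hw with rfl | hw
        · exact Or.inl rfl
        · exact Or.inr (hS w hw)
      · intro w hw hwb
        rw [Walk.support_cons, List.mem_cons] at hw
        rcases hw with rfl | hw
        · exact hx
        · exact hNS w hw hwb
      · intro hp
        rw [Walk.cons_isPath_iff] at hp ⊢
        exact ⟨hPath hp.1, fun hx' => hp.2 (hS x hx')⟩

lemma take_ne_end [DecidableEq V] {u v b : V} {Q : G.Walk u v} (hQ : Q.IsPath) (hb : b ∈ Q.support)
    (hbv : b ≠ v) : v ∉ (Q.takeUntil b hb).support := by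
  intro hv
  have hspec := Q.take_spec hb
  have hnd : Q.support.Nodup := hQ.support_nodup
  rw [← hspec, Walk.support_append] at hnd
  have hvd : v ∈ (Q.dropUntil b hb).support.tail := by
    have hend : v ∈ (Q.dropUntil b hb).support := Walk.end_mem_support _
    rw [Walk.support_eq_cons (Q.dropUntil b hb), List.mem_cons] at hend
    rcases hend with h | h
    · exact absurd h.symm hbv
    · exact h
  exact (List.nodup_append'.mp hnd).2.2 hv hvd

variable {V : Type}

lemma not_cut_of_mem_cycle (U : Net V) (hconn : U.ConnectedOn) {r : V} {C : U.graph.Walk r r}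
    (hC : C.IsCycle) {e : Sym2 V} (he : e ∈ C.edges) : ¬ U.IsCutEdge e := by
  induction e using Sym2.ind with
  | _ x y =>
    rintro ⟨hmem, hncon⟩
    have hadj : U.graph.Adj x y := hmem
    have hnb : ¬ U.graph.IsBridge s(x, y) := by
      intro hb
      exact (SimpleGraph.isBridge_iff_forall_cycle_notMem hmem).mp hb C hC he
    rw [SimpleGraph.isBridge_iff] at hnb
    push_neg at hnb
    have hreach : (U.graph.deleteEdges {s(x, y)}).Reachable x y := hnb
    apply hncon
    refine ⟨hconn.1, fun a ha b hb => ?_⟩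
    obtain ⟨w⟩ := hconn.2 a ha b hb
    clear ha hb
    show (U.graph.deleteEdges {s(x, y)}).Reachable a b
    induction w with
    | nil => exact SimpleGraph.Reachable.refl _
    | @cons a c b hadj' rest ihw =>
      refine SimpleGraph.Reachable.trans ?_ ihw
      by_cases hcase : s(a, c) = s(x, y)
      · rw [Sym2.eq_iff] at hcase
        rcases hcase with ⟨rfl, rfl⟩ | ⟨rfl, rfl⟩
        · exact hreach
        · exact hreach.symm
      · exact (SimpleGraph.deleteEdges_adj.mpr
          ⟨hadj', by rwa [Set.mem_singleton_iff]⟩).reachable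

lemma entangled_aux (U : Net V) (hconn : U.ConnectedOn) (h3 : U.QCuttable 3) :
    ∀ (n : ℕ) (u v : V) (P Q : U.graph.Walk u v), P.length ≤ n → P.IsPath → Q.IsPath →
      U.Entangled P → U.Entangled Q → P = Q := by
  classical
  intro n
  induction n with
  | zero =>
    intro u v P Q hlen hP hQ _ _
    cases P with
    | nil =>
      exact (SimpleGraph.Walk.isPath_iff_eq_nil.mp hQ).symm
    | cons h p' => simp [SimpleGraph.Walk.length_cons] at hlen
  | succ n ih =>
    intro u v P Q hlen hP hQ hPe hQe
    cases P with
    | nil =>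
      exact (SimpleGraph.Walk.isPath_iff_eq_nil.mp hQ).symm
    | @cons u x v hux p' =>
      cases Q with
      | nil =>
        exact absurd (SimpleGraph.Walk.isPath_iff_eq_nil.mp hP) (by simp)
      | @cons u y v huy q' =>
        by_cases hxy : x = y
        · subst hxy
          have hp' : p'.IsPath := hP.of_cons
          have hq' : q'.IsPath := hQ.of_cons
          have hunp : u ∉ p'.support := ((SimpleGraph.Walk.cons_isPath_iff hux p').mp hP).2
          have hunq : u ∉ q'.support := ((SimpleGraph.Walk.cons_isPath_iff huy q').mp hQ).2
          have hPe' : U.Entangled p' := by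
            intro w hw hwx hwv e hce hwe
            have hwu : w ≠ u := fun h => hunp (h ▸ hw)
            have hmem : w ∈ (SimpleGraph.Walk.cons hux p').support := by
              rw [SimpleGraph.Walk.support_cons]; exact List.mem_cons_of_mem _ hw
            have := hPe w hmem hwu hwv e hce hwe
            rw [SimpleGraph.Walk.edges_cons, List.mem_cons] at this
            rcases this with rfl | h
            · rw [Sym2.mem_iff] at hwe
              rcases hwe with rfl | rfl
              · exact absurd rfl hwu
              · exact absurd rfl hwx
            · exact h
          have hQe' : U.Entangled q' := by
            intro w hw hwx hwv e hce hwe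
            have hwu : w ≠ u := fun h => hunq (h ▸ hw)
            have hmem : w ∈ (SimpleGraph.Walk.cons huy q').support := by
              rw [SimpleGraph.Walk.support_cons]; exact List.mem_cons_of_mem _ hw
            have := hQe w hmem hwu hwv e hce hwe
            rw [SimpleGraph.Walk.edges_cons, List.mem_cons] at this
            rcases this with rfl | h
            · rw [Sym2.mem_iff] at hwe
              rcases hwe with rfl | rfl
              · exact absurd rfl hwu
              · exact absurd rfl hwx
            · exact h
          have hlen' : p'.length ≤ n := by
            rw [SimpleGraph.Walk.length_cons] at hlen; omega
          rw [ih x v p' q' hlen' hp' hq' hPe' hQe']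
        · exfalso
          set Qf := SimpleGraph.Walk.cons huy q' with hQf
          have hvS : v ∈ {w | w ∈ Qf.support} := Qf.end_mem_support
          obtain ⟨b, pp, hbS, hppE, hppS, hppNS, hppP⟩ :=
            first_hit p' {w | w ∈ Qf.support} hvS
          have hbQ : b ∈ Qf.support := hbS
          have hp' : p'.IsPath := hP.of_cons
          have hppPath : pp.IsPath := hppP hp'
          have hunp : u ∉ p'.support := ((SimpleGraph.Walk.cons_isPath_iff hux p').mp hP).2
          have hbu : b ≠ u := fun h => hunp (h ▸ hppS b pp.end_mem_support)
          set qq := Qf.takeUntil b hbQ with hqq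
          have hqqPath : qq.IsPath := hQ.takeUntil hbQ
          -- the glued walk
          set W : U.graph.Walk x u := pp.append qq.reverse with hW
          have hRsup : qq.reverse.support = b :: qq.reverse.support.tail :=
            SimpleGraph.Walk.support_eq_cons _
          have hRnodup : qq.reverse.support.Nodup := by
            rw [SimpleGraph.Walk.support_reverse]
            exact List.nodup_reverse.mpr hqqPath.support_nodup
          have hbtail : b ∉ qq.reverse.support.tail := by
            intro h
            have := hRnodup
            rw [hRsup, List.nodup_cons] at this
            exact this.1 h
          have htail_sub : ∀ w ∈ qq.reverse.support.tail, w ∈ qq.support := by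
            intro w hw
            have : w ∈ qq.reverse.support := by rw [hRsup]; exact List.mem_cons_of_mem _ hw
            rwa [SimpleGraph.Walk.support_reverse, List.mem_reverse] at this
          have hdisj : ∀ w ∈ pp.support, w ∉ qq.reverse.support.tail := by
            intro w hwpp hwt
            have hwb : w ≠ b := fun h => hbtail (h ▸ hwt)
            have hwq : w ∈ Qf.support :=
              SimpleGraph.Walk.support_takeUntil_subset Qf hbQ (htail_sub w hwt)
            exact hppNS w hwpp hwb hwq
          have hWsup : W.support = pp.support ++ qq.reverse.support.tail := by
            rw [hW, SimpleGraph.Walk.support_append]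
          have hWPath : W.IsPath := by
            rw [SimpleGraph.Walk.isPath_def, hWsup]
            rw [List.nodup_append]
            refine ⟨hppPath.support_nodup, ?_, ?_⟩
            · have := hRnodup
              rw [hRsup, List.nodup_cons] at this
              exact this.2
            · exact fun a ha b hb h => hdisj a ha (h ▸ hb)
          have hWedges : W.edges = pp.edges ++ qq.edges.reverse := by
            rw [hW, SimpleGraph.Walk.edges_append, SimpleGraph.Walk.edges_reverse]
          have hqqE : ∀ e ∈ qq.edges, e ∈ Qf.edges :=
            fun e he => SimpleGraph.Walk.edges_takeUntil_subset Qf hbQ he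
          have huxW : s(u, x) ∉ W.edges := by
            rw [hWedges, List.mem_append]
            rintro (h | h)
            · exact hunp (mem_support_of_mem_edges' (hppE _ h)
                (by rw [Sym2.mem_iff]; left; rfl))
            · rw [List.mem_reverse] at h
              have h1 : s(u, x) ∈ Qf.edges := hqqE _ h
              have h2 : s(u, y) ∈ Qf.edges := by
                rw [hQf, SimpleGraph.Walk.edges_cons]; exact List.mem_cons_self
              have := edge_at_start hQ h1 h2 (by rw [Sym2.mem_iff]; left; rfl)
                (by rw [Sym2.mem_iff]; left; rfl)
              rw [Sym2.congr_right] at this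
              exact hxy this
          have hCyc : (SimpleGraph.Walk.cons hux W).IsCycle :=
            (SimpleGraph.Walk.cons_isCycle_iff W hux).mpr ⟨hWPath, huxW⟩
          set C := SimpleGraph.Walk.cons hux W with hC
          have hCedges : C.edges = s(u, x) :: (pp.edges ++ qq.edges.reverse) := by
            rw [hC, SimpleGraph.Walk.edges_cons, hWedges]
          -- apply 3-cuttability
          obtain ⟨x0, y0, cp, hcpPath, hcpLen, hcpSup, _, hcpCut⟩ := h3 C hCyc
          obtain ⟨w, hwcp, hwu, hwb⟩ := pick3 hcpPath.support_nodup hcpLen u b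
          obtain ⟨e, hce, hwe⟩ := hcpCut w hwcp
          have hwC : w ∈ C.support := hcpSup w hwcp
          have hwW : w ∈ pp.support ∨ w ∈ qq.reverse.support.tail := by
            rw [hC, SimpleGraph.Walk.support_cons, List.mem_cons] at hwC
            rcases hwC with rfl | hwC
            · exact absurd rfl hwu
            · rw [hWsup, List.mem_append] at hwC
              exact hwC
          have hnotcut : ∀ f ∈ C.edges, ¬ U.IsCutEdge f :=
            fun f hf => not_cut_of_mem_cycle U hconn hCyc hf
          rcases hwW with hwpp | hwt
          · -- w is an internal vertex on the P side
            have hwQf : w ∉ Qf.support := hppNS w hwpp hwb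
            have hwv : w ≠ v := fun h => hwQf (h ▸ Qf.end_mem_support)
            have hwP : w ∈ (SimpleGraph.Walk.cons hux p').support := by
              rw [SimpleGraph.Walk.support_cons]
              exact List.mem_cons_of_mem _ (hppS w hwpp)
            have heP : e ∈ (SimpleGraph.Walk.cons hux p').edges :=
              hPe w hwP hwu hwv e hce hwe
            -- two edges at w on the path cons hux pp
            have hppPath' : (SimpleGraph.Walk.cons hux pp).IsPath := by
              rw [SimpleGraph.Walk.cons_isPath_iff]
              exact ⟨hppPath, fun h => hunp (hppS u h)⟩
            have hwmem : w ∈ (SimpleGraph.Walk.cons hux pp).support := by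
              rw [SimpleGraph.Walk.support_cons]
              exact List.mem_cons_of_mem _ hwpp
            obtain ⟨e₁, e₂, h1, h2, hne, hw1, hw2⟩ :=
              two_edges (SimpleGraph.Walk.cons hux pp) hppPath' hwmem hwu hwb
            have hsubP : ∀ f ∈ (SimpleGraph.Walk.cons hux pp).edges,
                f ∈ (SimpleGraph.Walk.cons hux p').edges := by
              intro f hf
              rw [SimpleGraph.Walk.edges_cons, List.mem_cons] at hf ⊢
              rcases hf with rfl | hf
              · exact Or.inl rfl
              · exact Or.inr (hppE f hf)
            have hsubC : ∀ f ∈ (SimpleGraph.Walk.cons hux pp).edges, f ∈ C.edges := by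
              intro f hf
              rw [SimpleGraph.Walk.edges_cons, List.mem_cons] at hf
              rw [hCedges, List.mem_cons]
              rcases hf with rfl | hf
              · exact Or.inl rfl
              · exact Or.inr (List.mem_append_left _ hf)
            have he1 : e ≠ e₁ := fun h => hnotcut e₁ (hsubC e₁ h1) (h ▸ hce)
            have he2 : e ≠ e₂ := fun h => hnotcut e₂ (hsubC e₂ h2) (h ▸ hce)
            rcases three_edges (SimpleGraph.Walk.cons hux p') hP hwu hwv heP
              (hsubP e₁ h1) (hsubP e₂ h2) hwe hw1 hw2 with h | h | h
            · exact he1 h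
            · exact he2 h
            · exact hne h
          · -- w is an internal vertex on the Q side
            have hwqq : w ∈ qq.support := htail_sub w hwt
            have hwb' : w ≠ b := hwb
            have hwQf : w ∈ Qf.support := SimpleGraph.Walk.support_takeUntil_subset Qf hbQ hwqq
            have hwv : w ≠ v := by
              by_cases hbv : b = v
              · exact fun h => hwb (h.trans hbv.symm)
              · intro h
                have hwqq2 : w ∈ (Qf.takeUntil b hbQ).support := by rw [← hqq]; exact hwqq
                exact take_ne_end hQ hbQ hbv (h ▸ hwqq2)
            have heQ : e ∈ Qf.edges := hQe w hwQf hwu hwv e hce hwe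
            obtain ⟨e₁, e₂, h1, h2, hne, hw1, hw2⟩ :=
              two_edges qq hqqPath hwqq hwu hwb'
            have hsubC : ∀ f ∈ qq.edges, f ∈ C.edges := by
              intro f hf
              rw [hCedges, List.mem_cons]
              exact Or.inr (List.mem_append_right _ (List.mem_reverse.mpr hf))
            have he1 : e ≠ e₁ := fun h => hnotcut e₁ (hsubC e₁ h1) (h ▸ hce)
            have he2 : e ≠ e₂ := fun h => hnotcut e₂ (hsubC e₂ h2) (h ▸ hce)
            rcases three_edges Qf hQ hwu hwv heQ (hqqE e₁ h1) (hqqE e₂ h2) hwe hw1 hw2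
              with h | h | h
            · exact he1 h
            · exact he2 h
            · exact hne h

end Helpers

open Net


/-- In a simple `3`-cuttable unrooted binary phylogenetic network,
there is at most one entangled path between any two vertices `u` and `v`. -/
theorem entangled_path_unique {V : Type} [Fintype V]
    (U : Net V) (X : Set V) (hU : U.IsUBPN X) (hs : U.Simple X) (h3 : U.QCuttable 3)
    (u v : V) (P Q : U.graph.Walk u v)
    (hP : P.IsPath) (hQ : Q.IsPath)
    (hPe : U.Entangled P) (hQe : U.Entangled Q) :
    P = Q := by
  exact entangled_aux U hU.1 h3 P.length u v P Q le_rfl hP hQ hPe hQe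
end

section
/- Let U be a simple 3-cuttable unrooted binary phylogenetic network on X, let T be an unrooted binary phylogenetic X-tree displayed by U, and let φ be an embedding of T in U. Let p be an internal vertex of T with neighbors q, u, and v. If q is not a leaf of T, then the concatenation of the paths φ({u,p}) and φ({p,v}) is an entangled path between φ(u) and φ(v) in U. -/
open Net


open SimpleGraph

section WalkAux

variable {V : Type} {G : SimpleGraph V}

lemma first_edge' {a b : V} (W : G.Walk a b) (h : a ≠ b) :
    ∃ z, G.Adj a z ∧ s(a, z) ∈ W.edges := by
  cases W with
  | nil => exact absurd rfl h
  | cons h' q => exact ⟨_, h', by simp⟩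

lemma last_edge' {a b : V} (W : G.Walk a b) (h : a ≠ b) :
    ∃ z, G.Adj z b ∧ s(z, b) ∈ W.edges := by
  obtain ⟨z, hz, hm⟩ := first_edge' W.reverse h.symm
  refine ⟨z, hz.symm, ?_⟩
  rw [Walk.edges_reverse, List.mem_reverse] at hm
  rwa [Sym2.eq_swap] at hm

lemma cycle_two_edges {r w : V} (C : G.Walk r r) (hC : C.IsCycle) (hw : w ∈ C.support) :
    ∃ n1 n2, n1 ≠ n2 ∧ G.Adj w n1 ∧ G.Adj w n2 ∧ s(w, n1) ∈ C.edges ∧ s(w, n2) ∈ C.edges := by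
  classical
  have hC' := hC.rotate hw
  have hedges : ∀ e, e ∈ (C.rotate w hw).edges ↔ e ∈ C.edges :=
    fun e => (C.rotate_edges w hw).mem_iff
  obtain ⟨n1, h1, q, hq⟩ := Walk.not_nil_iff.mp hC'.not_nil
  rw [hq, Walk.cons_isCycle_iff] at hC'
  obtain ⟨n2, h2, hm2⟩ := last_edge' q h1.ne'
  have hne : n1 ≠ n2 := by
    rintro rfl
    exact hC'.2 (by rwa [Sym2.eq_swap] at hm2)
  refine ⟨n1, n2, hne, h1, h2.symm, ?_, ?_⟩
  · rw [← hedges, hq]; simp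
  · rw [← hedges, hq, Sym2.eq_swap]; simp [hm2]

lemma path_two_edges {a b w : V} (P : G.Walk a b) (hP : P.IsPath) (hw : w ∈ P.support)
    (hwa : w ≠ a) (hwb : w ≠ b) :
    ∃ n1 n2, n1 ≠ n2 ∧ G.Adj w n1 ∧ G.Adj w n2 ∧ s(w, n1) ∈ P.edges ∧ s(w, n2) ∈ P.edges := by
  classical
  obtain ⟨n1, h1, hm1⟩ := last_edge' (P.takeUntil w hw) (Ne.symm hwa)
  obtain ⟨n2, h2, hm2⟩ := first_edge' (P.dropUntil w hw) hwb
  have hPe : P.edges = (P.takeUntil w hw).edges ++ (P.dropUntil w hw).edges := by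
    conv_lhs => rw [← P.take_spec hw]
    rw [Walk.edges_append]
  have hnd : P.edges.Nodup := hP.isTrail.edges_nodup
  rw [hPe] at hnd
  have hdisj := List.disjoint_of_nodup_append hnd
  have hne : n1 ≠ n2 := by
    rintro rfl
    exact hdisj (by rwa [Sym2.eq_swap] at hm1) hm2
  refine ⟨n1, n2, hne, h1.symm, h2, ?_, ?_⟩
  · rw [Sym2.eq_swap]; exact P.edges_takeUntil_subset hw hm1
  · exact P.edges_dropUntil_subset hw hm2

lemma three_of_list {l : List V} (h : 3 ≤ l.length) (hn : l.Nodup) :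
    ∃ a b c, a ≠ b ∧ a ≠ c ∧ b ≠ c ∧ a ∈ l ∧ b ∈ l ∧ c ∈ l := by
  match l, h with
  | a :: b :: c :: rest, _ =>
    simp only [List.nodup_cons, List.mem_cons] at hn
    push_neg at hn
    exact ⟨a, b, c, hn.1.1, hn.1.2.1, hn.2.1.1, by simp, by simp, by simp⟩

end WalkAux

section NetAux

variable {V : Type} [Fintype V]

lemma Net.deg_leaf {U : Net V} {X : Set V} (hU : U.IsUBPN X) {x : V} (hx : x ∈ X) :
    U.deg x = 1 := by
  rw [← hU.2.2] at hx; exact hx.2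

lemma Net.leaf_nbr {U : Net V} {x c : V} (h1 : U.deg x = 1) (hc : U.graph.Adj x c) :
    U.graph.neighborSet x = {c} := by
  obtain ⟨a, ha⟩ := Set.ncard_eq_one.mp h1
  have hmem : c ∈ U.graph.neighborSet x := hc
  rw [ha] at hmem ⊢
  rw [Set.mem_singleton_iff] at hmem
  rw [hmem]

lemma Net.deg_three' {U : Net V} {X : Set V} (hU : U.IsUBPN X) {w n1 n2 : V}
    (h1 : U.graph.Adj w n1) (h2 : U.graph.Adj w n2) (hne : n1 ≠ n2) : U.deg w = 3 := by
  have hw : w ∈ U.verts := (U.support h1).1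
  have hsub : ({n1, n2} : Set V) ⊆ U.graph.neighborSet w := by
    rw [Set.insert_subset_iff, Set.singleton_subset_iff]
    exact ⟨h1, h2⟩
  have h2' : 2 ≤ U.deg w := by
    have := Set.ncard_le_ncard hsub (Set.toFinite _)
    rwa [Set.ncard_pair hne] at this
  rcases hU.2.1 w hw with h | h
  · omega
  · exact h

lemma Net.nbrs_eq {U : Net V} {w n1 n2 n3 : V} (hdeg : U.deg w = 3)
    (h1 : U.graph.Adj w n1) (h2 : U.graph.Adj w n2) (h3 : U.graph.Adj w n3)
    (d12 : n1 ≠ n2) (d13 : n1 ≠ n3) (d23 : n2 ≠ n3) :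
    U.graph.neighborSet w = {n1, n2, n3} := by
  have hsub : ({n1, n2, n3} : Set V) ⊆ U.graph.neighborSet w := by
    rw [Set.insert_subset_iff, Set.insert_subset_iff, Set.singleton_subset_iff]
    exact ⟨h1, h2, h3⟩
  have hcard : ({n1, n2, n3} : Set V).ncard = 3 :=
    Set.ncard_eq_three.mpr ⟨n1, n2, n3, d12, d13, d23, rfl⟩
  exact (Set.eq_of_subset_of_ncard_le hsub (by rw [hcard]; exact le_of_eq hdeg)
    (Set.toFinite _)).symm

lemma two_other {s : Set V} {x : V} (h : s.ncard = 3) (hx : x ∈ s) :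
    ∃ a b, a ≠ b ∧ a ≠ x ∧ b ≠ x ∧ a ∈ s ∧ b ∈ s := by
  obtain ⟨a, b, c, hab, hac, hbc, rfl⟩ := Set.ncard_eq_three.mp h
  simp only [Set.mem_insert_iff, Set.mem_singleton_iff] at hx
  rcases hx with rfl | rfl | rfl
  · exact ⟨b, c, hbc, Ne.symm hab, Ne.symm hac, by simp, by simp⟩
  · exact ⟨a, c, hac, hab, Ne.symm hbc, by simp, by simp⟩
  · exact ⟨a, b, hab, hac, hbc, by simp, by simp⟩

end NetAux

section MainAux

open Net

lemma lemA {V : Type} [Fintype V]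
    (U T : Net V) (X : Set V) (hU : U.IsUBPN X)
    (hT : T.IsTree X)
    (fv : V → V) (fe : ∀ ⦃a b : V⦄, T.graph.Adj a b → U.graph.Walk (fv a) (fv b))
    (hemb : IsEmbedding T U X fv fe)
    (p q u v : V) (hp : p ∈ T.verts) (hpX : p ∉ X)
    (hq : T.graph.Adj p q) (hu : T.graph.Adj u p) (hv : T.graph.Adj p v)
    (hqu : q ≠ u) (hqv : q ≠ v) (huv : u ≠ v) (hqX : q ∉ X)
    (c x : V) (hx : x ∈ X) (hxc : U.graph.Adj x c) (hc3 : U.deg c = 3)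
    (hH : ∀ z, U.graph.Adj c z → z ≠ x → s(c, z) ∈ (fe hu).edges ∨ s(c, z) ∈ (fe hv).edges) :
    (x = u ∧ s(x, c) ∈ (fe hu).edges) ∨ (x = v ∧ s(x, c) ∈ (fe hv).edges) := by
  classical
  obtain ⟨hfvV, hfvX, hinj, hpath, hdisj⟩ := hemb
  have htU := hT.1
  have hdegUx : U.deg x = 1 := Net.deg_leaf hU hx
  have hUnbrx : U.graph.neighborSet x = {c} := Net.leaf_nbr hdegUx hxc
  have hnbrc : ∀ z, U.graph.Adj x z → z = c := by
    intro z hz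
    have : z ∈ U.graph.neighborSet x := hz
    rwa [hUnbrx, Set.mem_singleton_iff] at this
  have hxT : x ∈ T.leaves := by rw [htU.2.2]; exact hx
  have hxTv : x ∈ T.verts := hxT.1
  obtain ⟨t, ht⟩ := Set.ncard_eq_one.mp hxT.2
  have hxt : T.graph.Adj x t := by
    have : t ∈ T.graph.neighborSet x := by rw [ht]; rfl
    exact this
  have htTv : t ∈ T.verts := (T.support hxt).2
  have hxp : x ≠ p := fun h => hpX (h ▸ hx)
  have fvx : fv x = x := hfvX x hx
  have hxne_t : x ≠ t := hxt.ne
  have hfvt_ne_x : fv t ≠ x := fun h =>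
    hxne_t ((hinj t htTv x hxTv (h.trans fvx.symm))).symm
  have hdegTp : T.deg p = 3 := Net.deg_three' htU hq hu.symm hqu
  have hnbrTp : T.graph.neighborSet p = {q, u, v} :=
    Net.nbrs_eq hdegTp hq hu.symm hv hqu hqv huv
  by_cases htp : t = p
  · -- t = p : x is a neighbor of p, hence u or v
    have hxm : x ∈ ({q, u, v} : Set V) := by
      rw [← hnbrTp]
      show T.graph.Adj p x
      rw [← htp]
      exact hxt.symm
    simp only [Set.mem_insert_iff, Set.mem_singleton_iff] at hxm
    rcases hxm with h | h | h
    · exact absurd (h ▸ hx) hqX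
    · -- x = u
      left
      refine ⟨h, ?_⟩
      have hum : u ∈ T.verts := (T.support hu).1
      have hne : fv u ≠ fv p := fun h' => hu.ne (hinj u hum p hp h')
      have fvu : fv u = x := (hfvX u (h ▸ hx)).trans h.symm
      obtain ⟨z, hz, hm⟩ := first_edge' ((fe hu).copy fvu rfl)
        (by rw [← fvu]; exact hne)
      have hzc := hnbrc z hz
      rw [hzc, Walk.edges_copy] at hm
      exact hm
    · -- x = v
      right
      refine ⟨h, ?_⟩
      have hvm : v ∈ T.verts := (T.support hv).2
      have hne : fv p ≠ fv v := fun h' => hv.ne (hinj p hp v hvm h')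
      have fvv : fv v = x := (hfvX v (h ▸ hx)).trans h.symm
      obtain ⟨z, hz, hm⟩ := last_edge' ((fe hv).copy rfl fvv)
        (by rw [← fvv]; exact hne)
      have hzc := hnbrc z hz.symm
      rw [hzc, Walk.edges_copy] at hm
      rwa [Sym2.eq_swap] at hm
  · -- t ≠ p : contradiction
    exfalso
    have hne0 : x ≠ fv t := fun h' => hfvt_ne_x h'.symm
    set W := (fe hxt).copy fvx rfl with hWdef
    have hWpath : W.IsPath := (Walk.isPath_copy _ fvx rfl).mpr (hpath hxt)
    have hWedges : W.edges = (fe hxt).edges := Walk.edges_copy _ fvx rfl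
    obtain ⟨z0, hz0, hm0⟩ := first_edge' W hne0
    rw [hnbrc z0 hz0] at hm0
    -- hm0 : s(x, c) ∈ W.edges
    have hm0' : s(x, c) ∈ (fe hxt).edges := by rwa [hWedges] at hm0
    have hne_ut : s(x, t) ≠ s(u, p) := by
      intro h'
      rcases Sym2.eq_iff.mp h' with ⟨h1, h2⟩ | ⟨h1, h2⟩
      · exact htp h2
      · exact hxp h1
    have hne_vt : s(x, t) ≠ s(p, v) := by
      intro h'
      rcases Sym2.eq_iff.mp h' with ⟨h1, h2⟩ | ⟨h1, h2⟩
      · exact hxp h1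
      · exact htp h2
    by_cases hft : fv t = c
    · -- image of t is c itself
      have htdeg : T.deg t = 3 := by
        rcases htU.2.1 t htTv with h1 | h3
        · exfalso
          have htl : t ∈ T.leaves := ⟨htTv, h1⟩
          rw [htU.2.2] at htl
          have hftt : fv t = t := hfvX t htl
          have hcX : c ∈ X := by rw [← hft, hftt]; exact htl
          have := Net.deg_leaf hU hcX
          omega
        · exact h3
      obtain ⟨s1, s2, hs12, hs1x, hs2x, hs1m, hs2m⟩ :=
        two_other (show (T.graph.neighborSet t).ncard = 3 from htdeg)
          (show x ∈ T.graph.neighborSet t from hxt.symm)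
      have key : ∀ s', T.graph.Adj t s' → s' ≠ x → s' = p := by
        intro s' hts' hs'x
        have hne' : fv t ≠ fv s' :=
          fun h' => hts'.ne (hinj t htTv s' (T.support hts').2 h')
        obtain ⟨z, hz, hm⟩ := first_edge' ((fe hts').copy hft rfl)
          (by rw [← hft]; exact hne')
        have hm' : s(c, z) ∈ (fe hts').edges := by
          rwa [Walk.edges_copy] at hm
        have hzx : z ≠ x := by
          intro hzx'
          rw [hzx'] at hm'
          have hne2 : s(x, t) ≠ s(t, s') := by
            intro h'
            rcases Sym2.eq_iff.mp h' with ⟨h1, h2⟩ | ⟨h1, h2⟩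
            · exact hxne_t h1
            · exact hs'x h1.symm
          exact hdisj hxt hts' hne2 _ hm0' (by rwa [Sym2.eq_swap] at hm')
        rcases hH z hz hzx with hmem | hmem
        · have heq : s(t, s') = s(u, p) := by
            by_contra hne3
            exact hdisj hts' hu hne3 _ hm' hmem
          rcases Sym2.eq_iff.mp heq with ⟨h1, h2⟩ | ⟨h1, h2⟩
          · exact h2
          · exact absurd h1 htp
        · have heq : s(t, s') = s(p, v) := by
            by_contra hne3
            exact hdisj hts' hv hne3 _ hm' hmem
          rcases Sym2.eq_iff.mp heq with ⟨h1, h2⟩ | ⟨h1, h2⟩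
          · exact absurd h1 htp
          · exact h2
      have h1p := key s1 hs1m hs1x
      have h2p := key s2 hs2m hs2x
      exact hs12 (h1p.trans h2p.symm)
    · -- fv t ≠ c
      have hcsup : c ∈ W.support := Walk.snd_mem_support_of_mem_edges _ hm0
      obtain ⟨z, hz, hm⟩ := first_edge' (W.dropUntil c hcsup)
        (fun h' => hft h'.symm)
      have hmQ : s(c, z) ∈ (fe hxt).edges := by
        rw [← hWedges]
        exact Walk.edges_dropUntil_subset _ hcsup hm
      have hzx : z ≠ x := by
        intro hzx'
        rw [hzx'] at hm
        have hxQ1 : x ∈ (W.dropUntil c hcsup).support :=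
          Walk.snd_mem_support_of_mem_edges _ hm
        have hsupp : W.support =
            (W.takeUntil c hcsup).support ++ (W.dropUntil c hcsup).support.tail := by
          conv_lhs => rw [← W.take_spec hcsup]
          rw [Walk.support_append]
        have hnd := hWpath.support_nodup
        rw [hsupp] at hnd
        have hdisj2 := List.disjoint_of_nodup_append hnd
        have hx1 : x ∈ (W.takeUntil c hcsup).support :=
          Walk.start_mem_support _
        have hx2 : x ∈ (W.dropUntil c hcsup).support.tail := by
          have hcons := (W.dropUntil c hcsup).support_eq_cons
          rw [hcons] at hxQ1
          rcases List.mem_cons.mp hxQ1 with h' | h'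
          · exact absurd h' hxc.ne
          · exact h'
        exact hdisj2 hx1 hx2
      rcases hH z hz hzx with hmem | hmem
      · exact hdisj hxt hu hne_ut _ hmQ hmem
      · exact hdisj hxt hv hne_vt _ hmQ hmem

lemma lemB {V : Type} [Fintype V]
    (U T : Net V) (X : Set V) (hU : U.IsUBPN X) (hs : U.Simple X)
    (hT : T.IsTree X)
    (fv : V → V) (fe : ∀ ⦃a b : V⦄, T.graph.Adj a b → U.graph.Walk (fv a) (fv b))
    (hemb : IsEmbedding T U X fv fe)
    (p q u v : V) (hp : p ∈ T.verts) (hpX : p ∉ X)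
    (hq : T.graph.Adj p q) (hu : T.graph.Adj u p) (hv : T.graph.Adj p v)
    (hqu : q ≠ u) (hqv : q ≠ v) (huv : u ≠ v) (hqX : q ∉ X)
    {r : V} (C : U.graph.Walk r r) (hC : C.IsCycle)
    (hCE : ∀ f ∈ C.edges, f ∈ (fe hu).edges ∨ f ∈ (fe hv).edges)
    {c : V} (hcC : c ∈ C.support) {e : Sym2 V} (hcut : U.IsCutEdge e) (hce : c ∈ e) :
    ∃ x, (x = u ∨ x = v) ∧ U.graph.neighborSet x = {c} := by
  obtain ⟨x, hxX, hxe⟩ := hs e hcut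
  obtain ⟨n1, n2, hne, h1, h2, hm1, hm2⟩ := cycle_two_edges C hC hcC
  have hc3 : U.deg c = 3 := Net.deg_three' hU h1 h2 hne
  have hcx : c ≠ x := by
    intro h'
    have := Net.deg_leaf hU hxX
    rw [← h'] at this
    omega
  have hex : e = s(c, x) := (Sym2.mem_and_mem_iff hcx).mp ⟨hce, hxe⟩
  have hadj : U.graph.Adj c x := by
    rw [← SimpleGraph.mem_edgeSet, ← hex]
    exact hcut.1
  have hleaf : ∀ y, y ∈ C.support → y ≠ x := by
    intro y hy h'
    obtain ⟨m1, m2, hmne, hh1, hh2, _, _⟩ := cycle_two_edges C hC hy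
    have hd3 : U.deg y = 3 := Net.deg_three' hU hh1 hh2 hmne
    have := Net.deg_leaf hU hxX
    rw [← h'] at this
    omega
  have hxn1 : n1 ≠ x := hleaf n1 (Walk.snd_mem_support_of_mem_edges C hm1)
  have hxn2 : n2 ≠ x := hleaf n2 (Walk.snd_mem_support_of_mem_edges C hm2)
  have hnbrc : U.graph.neighborSet c = {n1, n2, x} :=
    Net.nbrs_eq hc3 h1 h2 hadj hne hxn1 hxn2
  have hH : ∀ z, U.graph.Adj c z → z ≠ x →
      s(c, z) ∈ (fe hu).edges ∨ s(c, z) ∈ (fe hv).edges := by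
    intro z hz hzx
    have hz' : z ∈ ({n1, n2, x} : Set V) := by rw [← hnbrc]; exact hz
    simp only [Set.mem_insert_iff, Set.mem_singleton_iff] at hz'
    rcases hz' with h' | h' | h'
    · rw [h']; exact hCE _ hm1
    · rw [h']; exact hCE _ hm2
    · exact absurd h' hzx
  rcases lemA U T X hU hT fv fe hemb p q u v hp hpX hq hu hv hqu hqv huv hqX
      c x hxX hadj.symm hc3 hH with ⟨hxu, _⟩ | ⟨hxv, _⟩
  · exact ⟨x, Or.inl hxu, Net.leaf_nbr (Net.deg_leaf hU hxX) hadj.symm⟩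
  · exact ⟨x, Or.inr hxv, Net.leaf_nbr (Net.deg_leaf hU hxX) hadj.symm⟩

end MainAux

/-- Let `U` be a simple `3`-cuttable unrooted binary phylogenetic
network on `X`, let `T` be an unrooted binary phylogenetic `X`-tree displayed by `U`, and
let `(fv, fe)` be an embedding of `T` in `U`.  Let `p` be an internal vertex of `T` with
neighbors `q`, `u`, and `v`.  If `q` is not a leaf, then the concatenation of the paths
assigned to `{u, p}` and `{p, v}` is an entangled path between `fv u` and `fv v`. -/
theorem concat_entangled {V : Type} [Fintype V]
    (U T : Net V) (X : Set V) (hU : U.IsUBPN X) (hs : U.Simple X) (h3 : U.QCuttable 3)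
    (hT : T.IsTree X) (hd : U.Displays T X)
    (fv : V → V) (fe : ∀ ⦃a b : V⦄, T.graph.Adj a b → U.graph.Walk (fv a) (fv b))
    (hemb : IsEmbedding T U X fv fe)
    (p q u v : V) (hp : p ∈ T.verts) (hpX : p ∉ X)
    (hq : T.graph.Adj p q) (hu : T.graph.Adj u p) (hv : T.graph.Adj p v)
    (hqu : q ≠ u) (hqv : q ≠ v) (huv : u ≠ v)
    (hqX : q ∉ X) :
    ((fe hu).append (fe hv)).IsPath ∧ U.Entangled ((fe hu).append (fe hv)) := by
  classical
  have hApath : (fe hu).IsPath := hemb.2.2.2.1 hu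
  have hBpath : (fe hv).IsPath := hemb.2.2.2.1 hv
  have hdisjE := hemb.2.2.2.2
  have hne_uv : s(u, p) ≠ s(p, v) := by
    intro h'
    rcases Sym2.eq_iff.mp h' with ⟨h1, h2⟩ | ⟨h1, h2⟩
    · exact hu.ne h1
    · exact huv h1
  have hAB : ∀ f ∈ (fe hu).edges, f ∉ (fe hv).edges := hdisjE hu hv hne_uv
  -- Key claim: the two paths meet only at `fv p`.
  have hkey : ∀ w, w ∈ (fe hu).support → w ∈ (fe hv).support → w = fv p := by
    intro w hwA hwB
    by_contra hwp
    have hA1p : ((fe hu).dropUntil w hwA).IsPath := hApath.dropUntil hwA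
    have hB1p : ((fe hv).takeUntil w hwB).IsPath := hBpath.takeUntil hwB
    have hA1e : ∀ f ∈ ((fe hu).dropUntil w hwA).edges, f ∈ (fe hu).edges :=
      fun f hf => Walk.edges_dropUntil_subset _ hwA hf
    have hB1e : ∀ f ∈ ((fe hv).takeUntil w hwB).edges, f ∈ (fe hv).edges :=
      fun f hf => Walk.edges_takeUntil_subset _ hwB hf
    set S : Set (Sym2 V) :=
      {f | f ∈ ((fe hu).dropUntil w hwA).edges ∨ f ∈ ((fe hv).takeUntil w hwB).edges}
      with hSdef
    have hSU : ∀ f ∈ S, f ∈ U.graph.edgeSet := by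
      rintro f (hf | hf)
      · exact Walk.edges_subset_edgeSet _ (hA1e f hf)
      · exact Walk.edges_subset_edgeSet _ (hB1e f hf)
    set G' := SimpleGraph.fromEdgeSet S with hG'def
    have hmemG : ∀ f ∈ S, f ∈ G'.edgeSet := by
      intro f hf
      rw [hG'def, SimpleGraph.edgeSet_fromEdgeSet]
      exact ⟨hf, SimpleGraph.not_isDiag_of_mem_edgeSet _ (hSU f hf)⟩
    have hA1G : ∀ f ∈ ((fe hu).dropUntil w hwA).edges, f ∈ G'.edgeSet :=
      fun f hf => hmemG f (Or.inl hf)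
    have hB1G : ∀ f ∈ ((fe hv).takeUntil w hwB).edges, f ∈ G'.edgeSet :=
      fun f hf => hmemG f (Or.inr hf)
    obtain ⟨z0, hz0, hmz0⟩ := first_edge' ((fe hu).dropUntil w hwA) hwp
    have hzB : s(w, z0) ∉ ((fe hv).takeUntil w hwB).edges :=
      fun h' => hAB _ (hA1e _ hmz0) (hB1e _ h')
    have hpnee : (⟨_, hA1p.transfer hA1G⟩ : G'.Path w (fv p)) ≠
        ⟨_, (hB1p.transfer hB1G).reverse⟩ := by
      intro hEq
      have hedges := congrArg (fun P : G'.Path w (fv p) => (P : G'.Walk w (fv p)).edges) hEq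
      simp only [Walk.edges_reverse, Walk.edges_transfer] at hedges
      apply hzB
      rw [← List.mem_reverse, ← hedges]
      exact hmz0
    have hnac : ¬ G'.IsAcyclic :=
      fun hac => hpnee (SimpleGraph.isAcyclic_iff_path_unique.mp hac _ _)
    rw [SimpleGraph.IsAcyclic] at hnac
    push_neg at hnac
    obtain ⟨r, C₀, hC₀⟩ := hnac
    have hCU : ∀ f ∈ C₀.edges, f ∈ U.graph.edgeSet := by
      intro f hf
      have hf' := Walk.edges_subset_edgeSet C₀ hf
      rw [hG'def, SimpleGraph.edgeSet_fromEdgeSet] at hf'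
      exact hSU f hf'.1
    have hC : (C₀.transfer U.graph hCU).IsCycle := hC₀.transfer hCU
    have hCE : ∀ f ∈ (C₀.transfer U.graph hCU).edges,
        f ∈ (fe hu).edges ∨ f ∈ (fe hv).edges := by
      intro f hf
      rw [Walk.edges_transfer] at hf
      have hf' := Walk.edges_subset_edgeSet C₀ hf
      rw [hG'def, SimpleGraph.edgeSet_fromEdgeSet] at hf'
      rcases hf'.1 with h' | h'
      · exact Or.inl (hA1e f h')
      · exact Or.inr (hB1e f h')
    obtain ⟨xx, yy, P3, hP3path, hP3len, hP3supp, -, hP3cut⟩ := h3 (C₀.transfer U.graph hCU) hC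
    obtain ⟨c1, c2, c3, h12, h13, h23, hc1, hc2, hc3m⟩ :=
      three_of_list hP3len ((Walk.isPath_def _).mp hP3path)
    obtain ⟨e1, hcut1, hce1⟩ := hP3cut c1 hc1
    obtain ⟨e2, hcut2, hce2⟩ := hP3cut c2 hc2
    obtain ⟨e3, hcut3, hce3⟩ := hP3cut c3 hc3m
    obtain ⟨x1, hx1uv, hx1n⟩ := lemB U T X hU hs hT fv fe hemb p q u v hp hpX hq hu hv
      hqu hqv huv hqX _ hC hCE (hP3supp c1 hc1) hcut1 hce1
    obtain ⟨x2, hx2uv, hx2n⟩ := lemB U T X hU hs hT fv fe hemb p q u v hp hpX hq hu hv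
      hqu hqv huv hqX _ hC hCE (hP3supp c2 hc2) hcut2 hce2
    obtain ⟨x3, hx3uv, hx3n⟩ := lemB U T X hU hs hT fv fe hemb p q u v hp hpX hq hu hv
      hqu hqv huv hqX _ hC hCE (hP3supp c3 hc3m) hcut3 hce3
    have hx12 : x1 ≠ x2 := by
      intro h'
      rw [h', hx2n] at hx1n
      exact h12 ((Set.singleton_eq_singleton_iff.mp hx1n.symm))
    have hx13 : x1 ≠ x3 := by
      intro h'
      rw [h', hx3n] at hx1n
      exact h13 ((Set.singleton_eq_singleton_iff.mp hx1n.symm))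
    have hx23 : x2 ≠ x3 := by
      intro h'
      rw [h', hx3n] at hx2n
      exact h23 ((Set.singleton_eq_singleton_iff.mp hx2n.symm))
    rcases hx1uv with h1 | h1 <;> rcases hx2uv with h2 | h2 <;> rcases hx3uv with h3 | h3
    · exact hx12 (h1.trans h2.symm)
    · exact hx12 (h1.trans h2.symm)
    · exact hx13 (h1.trans h3.symm)
    · exact hx23 (h2.trans h3.symm)
    · exact hx23 (h2.trans h3.symm)
    · exact hx13 (h1.trans h3.symm)
    · exact hx12 (h1.trans h2.symm)
    · exact hx12 (h1.trans h2.symm)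
  -- Part 1: the concatenation is a path.
  have hPpath : ((fe hu).append (fe hv)).IsPath := by
    rw [Walk.isPath_def, Walk.support_append, List.nodup_append]
    refine ⟨hApath.support_nodup, ?_, ?_⟩
    · have := hBpath.support_nodup
      rw [(fe hv).support_eq_cons] at this
      exact this.of_cons
    · intro a haA b haB hab
      subst hab
      have haB' : a ∈ (fe hv).support := List.mem_of_mem_tail haB
      have hap : a = fv p := hkey a haA haB'
      have hnd := hBpath.support_nodup
      rw [(fe hv).support_eq_cons, List.nodup_cons] at hnd
      rw [hap] at haB
      exact hnd.1 haB
  refine ⟨hPpath, ?_⟩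
  -- Part 2: entangled.
  intro w hw hwu hwv e hcut hwe
  obtain ⟨x, hxX, hxe⟩ := hs e hcut
  obtain ⟨n1, n2, hnen, hn1, hn2, hmn1, hmn2⟩ := path_two_edges _ hPpath hw hwu hwv
  have hdegw : U.deg w = 3 := Net.deg_three' hU hn1 hn2 hnen
  have hwx : w ≠ x := by
    intro h'
    have := Net.deg_leaf hU hxX
    rw [← h'] at this
    omega
  have hex : e = s(w, x) := (Sym2.mem_and_mem_iff hwx).mp ⟨hwe, hxe⟩
  have hadj : U.graph.Adj w x := by
    rw [← SimpleGraph.mem_edgeSet, ← hex]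
    exact hcut.1
  by_contra heP
  have hxn1 : n1 ≠ x := by
    intro h'
    apply heP
    rw [hex, ← h']
    exact hmn1
  have hxn2 : n2 ≠ x := by
    intro h'
    apply heP
    rw [hex, ← h']
    exact hmn2
  have hnbrw : U.graph.neighborSet w = {n1, n2, x} :=
    Net.nbrs_eq hdegw hn1 hn2 hadj hnen hxn1 hxn2
  have hH : ∀ z, U.graph.Adj w z → z ≠ x →
      s(w, z) ∈ (fe hu).edges ∨ s(w, z) ∈ (fe hv).edges := by
    intro z hz hzx
    have hz' : z ∈ ({n1, n2, x} : Set V) := by rw [← hnbrw]; exact hz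
    simp only [Set.mem_insert_iff, Set.mem_singleton_iff] at hz'
    rcases hz' with h' | h' | h'
    · rw [h']
      rw [Walk.edges_append] at hmn1
      exact List.mem_append.mp hmn1
    · rw [h']
      rw [Walk.edges_append] at hmn2
      exact List.mem_append.mp hmn2
    · exact absurd h' hzx
  rcases lemA U T X hU hT fv fe hemb p q u v hp hpX hq hu hv hqu hqv huv hqX
      w x hxX hadj.symm hdegw hH with ⟨-, hmem⟩ | ⟨-, hmem⟩
  · apply heP
    rw [hex, Sym2.eq_swap, Walk.edges_append]
    exact List.mem_append.mpr (Or.inl hmem)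
  · apply heP
    rw [hex, Sym2.eq_swap, Walk.edges_append]
    exact List.mem_append.mpr (Or.inr hmem)
end

section
/- Let T be an unrooted binary phylogenetic X-tree with |X| ≥ 4. Then T has either a pendant subtree on three leaves x, y, z such that {x,y} is a cherry of T, or a pendant subtree on four leaves w, x, y, z such that {x,y} and {w,z} are cherries of T. -/
namespace Net

variable {V : Type}

/-- The set `S` is the leaf set of a pendant subtree of the tree `T` with labels `X`:
there is an edge `{a, b}` of `T` whose deletion detaches a subtree (on the `a`-side)
whose leaves are exactly the elements of `S`. -/
def PendantOn (T : Net V) (X S : Set V) : Prop :=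
  ∃ a b, T.graph.Adj a b ∧
    ∀ x ∈ X, (x ∈ S ↔ (T.graph.deleteEdges {s(a, b)}).Reachable a x)

/-- `{x, y}` is a cherry of the tree `T`: distinct leaves adjacent to a common vertex. -/
def IsCherryOf (T : Net V) (x y : V) : Prop :=
  x ≠ y ∧ ∃ p, T.graph.Adj x p ∧ T.graph.Adj y p

end Net

open Net

section Helpers
open SimpleGraph Walk

private lemma key_lemma {V : Type} {G : SimpleGraph V} (hac : G.IsAcyclic)
    {u t x b : V} (h : G.Adj u b) (R : G.Walk b t)
    (hP : (Walk.cons h R).IsPath) (hx : G.Adj u x)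
    (hmem : x ∈ (Walk.cons h R).support) : x = b := by
  classical
  have huniq := SimpleGraph.isAcyclic_iff_path_unique.mp hac
  set Q := Walk.cons h R with hQdef
  have hT1 : (Q.takeUntil x hmem).IsPath := hP.takeUntil hmem
  have hE : (Walk.cons hx Walk.nil : G.Walk u x).IsPath := by
    simp [Walk.cons_isPath_iff, hx.ne]
  have := huniq ⟨Q.takeUntil x hmem, hT1⟩ ⟨Walk.cons hx Walk.nil, hE⟩
  have heq : Q.takeUntil x hmem = Walk.cons hx Walk.nil := congrArg Subtype.val this
  have hedge : s(u, x) ∈ Q.edges := by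
    have := Q.edges_takeUntil_subset hmem
    rw [heq] at this
    exact this (by simp)
  rw [hQdef, Walk.edges_cons] at hedge
  rcases List.mem_cons.mp hedge with h1 | h2
  · rcases Sym2.eq_iff.mp h1 with ⟨-, rfl⟩ | ⟨h3, rfl⟩
    · rfl
    · exact absurd h3 h.ne
  · exact absurd (Walk.fst_mem_support_of_mem_edges R h2)
      ((Walk.cons_isPath_iff h R).mp hP).2

private lemma max_endpoint {V : Type} {G : SimpleGraph V} [Fintype V] (hac : G.IsAcyclic)
    (hdeg : ∀ ⦃v w : V⦄, G.Adj v w → (G.neighborSet v).ncard = 1 ∨ (G.neighborSet v).ncard = 3)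
    {u t : V} (P : G.Walk u t) (hP : P.IsPath) (hlen : P.length ≠ 0)
    (hmax : ∀ (a b : V) (q : G.Walk a b), q.IsPath → q.length ≤ P.length) :
    (G.neighborSet u).ncard = 1 := by
  classical
  cases P with
  | nil => simp at hlen
  | cons h R =>
    rcases hdeg h with h1 | h3
    · exact h1
    rename_i b
    exfalso
    have hb : b ∈ G.neighborSet u := h
    have hex : ∃ x ∈ G.neighborSet u, x ≠ b := by
      by_contra hno
      push_neg at hno
      have hsub : G.neighborSet u ⊆ ({b} : Set V) := fun x hx => hno x hx
      have hle := Set.ncard_le_ncard hsub (Set.finite_singleton b)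
      rw [Set.ncard_singleton, h3] at hle
      omega
    obtain ⟨x, hxN, hxb⟩ := hex
    have hx : G.Adj u x := hxN
    by_cases hmem : x ∈ (Walk.cons h R).support
    · exact hxb (key_lemma hac h R ‹_› hx hmem)
    · have hQ : (Walk.cons hx.symm (Walk.cons h R)).IsPath :=
        (Walk.cons_isPath_iff _ _).mpr ⟨‹_›, hmem⟩
      have := hmax _ _ _ hQ
      simp [Walk.length_cons] at this

private lemma reach_mem {V : Type} {G' : SimpleGraph V} {A : Set V}
    (hA : ∀ a ∈ A, ∀ b, G'.Adj a b → b ∈ A) :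
    ∀ {u v : V}, u ∈ A → G'.Walk u v → v ∈ A
  | _, _, hu, .nil => hu
  | _, _, hu, .cons h p => reach_mem hA (hA _ hu _ h) p

private lemma ncard1_eq {V : Type} {s : Set V} (h1 : s.ncard = 1) {a : V} (ha : a ∈ s) :
    s = {a} := by
  obtain ⟨b, rfl⟩ := Set.ncard_eq_one.mp h1
  simp_all

private lemma ncard3_second {V : Type} {s : Set V} (h3 : s.ncard = 3) {a : V} (_ : a ∈ s) :
    ∃ b ∈ s, b ≠ a := by
  by_contra hno
  push_neg at hno
  have hsub : s ⊆ ({a} : Set V) := fun x hx => hno x hx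
  have h := Set.ncard_le_ncard hsub (Set.finite_singleton a)
  rw [Set.ncard_singleton, h3] at h
  omega

private lemma ncard3_third {V : Type} {s : Set V} (h3 : s.ncard = 3) {a b : V}
    (ha : a ∈ s) (hb : b ∈ s) : ∃ c ∈ s, c ≠ a ∧ c ≠ b := by
  by_contra hno
  push_neg at hno
  have hsub : s ⊆ {a, b} := by
    intro x hx
    rcases em (x = a) with rfl | hxa
    · exact Set.mem_insert _ _
    · rcases em (x = b) with rfl | hxb
      · exact Set.mem_insert_of_mem _ rfl
      · exact absurd hxb (not_not_intro ((hno x hx) hxa))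
  have h2 := Set.ncard_le_ncard hsub (Set.toFinite _)
  have : ({a, b} : Set V).ncard ≤ 2 := by
    calc ({a, b} : Set V).ncard ≤ ({b} : Set V).ncard + 1 := Set.ncard_insert_le _ _
    _ ≤ 2 := by simp
  omega

private lemma ncard3_eq {V : Type} {s : Set V} (hfin : s.Finite) (h3 : s.ncard = 3)
    {a b c : V} (ha : a ∈ s) (hb : b ∈ s) (hc : c ∈ s)
    (hab : a ≠ b) (hac : a ≠ c) (hbc : b ≠ c) : s = ({a, b, c} : Set V) := by
  have hsub : ({a, b, c} : Set V) ⊆ s := by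
    intro x hx
    rcases hx with rfl | rfl | rfl <;> assumption
  have hcard : ({a, b, c} : Set V).ncard = 3 := by
    rw [Set.ncard_insert_of_notMem (by simp [hab, hac]) (Set.toFinite _),
        Set.ncard_insert_of_notMem (by simp [hbc]) (Set.toFinite _), Set.ncard_singleton]
  exact (Set.eq_of_subset_of_ncard_le hsub (by rw [h3, hcard]) hfin).symm

end Helpers

open SimpleGraph Walk

set_option maxHeartbeats 2000000 in
/-- Every unrooted binary phylogenetic `X`-tree with `|X| ≥ 4` has
either a pendant subtree on three leaves `x, y, z` such that `{x, y}` is a cherry, or a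
pendant subtree on four leaves `w, x, y, z` such that `{x, y}` and `{w, z}` are
cherries. -/
theorem pendant_subtree_guarantee {V : Type} [Fintype V]
    (T : Net V) (X : Set V) (hT : T.IsTree X) (hX : 4 ≤ X.ncard) :
    (∃ x y z : V, x ∈ X ∧ y ∈ X ∧ z ∈ X ∧ x ≠ y ∧ x ≠ z ∧ y ≠ z ∧
      T.PendantOn X {x, y, z} ∧ T.IsCherryOf x y) ∨
    (∃ w x y z : V, w ∈ X ∧ x ∈ X ∧ y ∈ X ∧ z ∈ X ∧
      w ≠ x ∧ w ≠ y ∧ w ≠ z ∧ x ≠ y ∧ x ≠ z ∧ y ≠ z ∧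
      T.PendantOn X {w, x, y, z} ∧ T.IsCherryOf x y ∧ T.IsCherryOf w z) := by
  classical
  obtain ⟨⟨⟨hvne, hreach⟩, hdeg, hleaves⟩, hac⟩ := hT
  set G := T.graph with hG
  have hdeg' : ∀ ⦃v w : V⦄, G.Adj v w →
      (G.neighborSet v).ncard = 1 ∨ (G.neighborSet v).ncard = 3 :=
    fun v w h => hdeg v (T.support h).1
  have hXmem : ∀ x ∈ X, x ∈ T.verts ∧ (G.neighborSet x).ncard = 1 := by
    intro x hx; rw [← hleaves] at hx; exact hx
  have hmemX : ∀ v, v ∈ T.verts → (G.neighborSet v).ncard = 1 → v ∈ X := by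
    intro v h1 h2; rw [← hleaves]; exact ⟨h1, h2⟩
  -- a maximum-length path
  set L : Set ℕ := {n | ∃ (a b : V) (p : G.Walk a b), p.IsPath ∧ p.length = n} with hL
  have hbdd : BddAbove L := by
    refine ⟨Fintype.card V, ?_⟩
    rintro n ⟨a, b, p, hp, rfl⟩
    exact hp.length_lt.le
  obtain ⟨x0, hx0⟩ := Set.nonempty_of_ncard_ne_zero (show X.ncard ≠ 0 by omega)
  obtain ⟨hx0v, hx0d⟩ := hXmem x0 hx0
  obtain ⟨b0, hb0⟩ := Set.ncard_eq_one.mp hx0d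
  have hadj0 : G.Adj x0 b0 := by
    have : b0 ∈ G.neighborSet x0 := by rw [hb0]; rfl
    exact this
  have h1L : (1 : ℕ) ∈ L :=
    ⟨x0, b0, Walk.cons hadj0 Walk.nil, by simp [Walk.cons_isPath_iff, hadj0.ne], by simp⟩
  have hkL : sSup L ∈ L := Nat.sSup_mem ⟨1, h1L⟩ hbdd
  set k := sSup L with hkdef
  obtain ⟨v0, vk, P, hP, hPlen⟩ := hkL
  have hmax : ∀ (a b : V) (q : G.Walk a b), q.IsPath → q.length ≤ P.length := by
    intro a b q hq
    rw [hPlen]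
    exact le_csSup hbdd ⟨a, b, q, hq, rfl⟩
  have hk1 : 1 ≤ k := le_csSup hbdd h1L
  have hend : ∀ {u t : V} (Q : G.Walk u t), Q.IsPath → Q.length = P.length →
      (G.neighborSet u).ncard = 1 := by
    intro u t Q hQ hlen
    refine max_endpoint hac hdeg' Q hQ (by rw [hlen, hPlen]; omega) ?_
    intro a b q hq
    rw [hlen]
    exact hmax a b q hq
  have hdv0 : (G.neighborSet v0).ncard = 1 := hend P hP rfl
  have hdvk : (G.neighborSet vk).ncard = 1 := hend P.reverse hP.reverse (by simp)
  -- the maximum length is at least 3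
  have hk3 : 3 ≤ k := by
    by_contra hlt
    push_neg at hlt
    have hk2 : k = 1 ∨ k = 2 := by omega
    rcases hk2 with hk | hk
    · -- k = 1
      have hadj : G.Adj v0 vk := by
        rw [hk] at hPlen
        cases P with
        | nil => simp at hPlen
        | cons h R =>
          cases R with
          | nil => exact h
          | cons h' R' => simp [Walk.length_cons] at hPlen
      have hsub : X ⊆ ({v0, vk} : Set V) := by
        intro x hx
        obtain ⟨hxv, hxd⟩ := hXmem x hx
        obtain ⟨wq⟩ := hreach v0 (T.support hadj).1 x hxv
        have hql : (wq.toPath.1).length ≤ 1 := by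
          have := hmax _ _ _ wq.toPath.2
          rw [hPlen, hk] at this
          exact this
        have hqp := wq.toPath.2
        generalize hq0 : wq.toPath.1 = q0 at hql hqp
        cases q0 with
        | nil => exact Set.mem_insert _ _
        | cons h' R' =>
          cases R' with
          | nil =>
            have hxN : x ∈ G.neighborSet v0 := h'
            rw [ncard1_eq hdv0 (show vk ∈ G.neighborSet v0 from hadj)] at hxN
            rw [Set.mem_singleton_iff.mp hxN]
            exact Set.mem_insert_of_mem _ rfl
          | cons h'' R'' => simp [Walk.length_cons] at hql
      have hle := Set.ncard_le_ncard hsub (Set.toFinite _)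
      have h2' : ({v0, vk} : Set V).ncard ≤ 2 := by
        calc ({v0, vk} : Set V).ncard ≤ ({vk} : Set V).ncard + 1 := Set.ncard_insert_le _ _
        _ ≤ 2 := by simp
      omega
    · -- k = 2
      rw [hk] at hPlen
      cases P with
      | nil => simp at hPlen
      | cons h01 R1 =>
        rename_i v1
        cases R1 with
        | nil => simp at hPlen
        | cons h12 R2 =>
          cases R2 with
          | cons h23 R3 => simp [Walk.length_cons] at hPlen
          | nil =>
            -- P = v0 - v1 - vk
            have h0n : v0 ∉ (Walk.cons h12 Walk.nil).support :=
              ((Walk.cons_isPath_iff _ _).mp hP).2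
            have h1k : v1 ≠ vk := h12.ne
            simp only [Walk.support_cons, Walk.support_nil, List.mem_cons,
              List.not_mem_nil, or_false, not_or] at h0n
            obtain ⟨h01ne, h0kne⟩ := h0n
            have hd1 : (G.neighborSet v1).ncard = 3 := by
              rcases hdeg' h12 with h1 | h3
              · exfalso
                have h0m : v0 ∈ G.neighborSet v1 := h01.symm
                rw [ncard1_eq h1 (show vk ∈ G.neighborSet v1 from h12)] at h0m
                exact h0kne (Set.mem_singleton_iff.mp h0m)
              · exact h3
            obtain ⟨u3, hu3N, hu3v0, hu3vk⟩ :=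
              ncard3_third hd1 (show v0 ∈ G.neighborSet v1 from h01.symm)
                (show vk ∈ G.neighborSet v1 from h12)
            have hN1 : G.neighborSet v1 = {v0, vk, u3} :=
              ncard3_eq (Set.toFinite _) hd1 h01.symm h12 hu3N h0kne hu3v0.symm hu3vk.symm
            have hu3adj : G.Adj v1 u3 := hu3N
            have hdu3 : (G.neighborSet u3).ncard = 1 := by
              have hQ : (Walk.cons hu3adj.symm (Walk.cons h12 Walk.nil)).IsPath := by
                rw [Walk.cons_isPath_iff]
                refine ⟨hP.of_cons, ?_⟩
                simp [Walk.support_cons, hu3adj.ne', hu3vk]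
              exact hend _ hQ (by simp [Walk.length_cons])
            have hsub : X ⊆ ({v0, vk, u3} : Set V) := by
              intro x hx
              obtain ⟨hxv, hxd⟩ := hXmem x hx
              obtain ⟨wq⟩ := hreach v1 (T.support h12).1 x hxv
              have hql : (wq.toPath.1).length ≤ 2 := by
                have := hmax _ _ _ wq.toPath.2
                rw [hPlen] at this
                exact this
              have hqp := wq.toPath.2
              generalize hq0 : wq.toPath.1 = q0 at hql hqp
              cases q0 with
              | nil =>
                exfalso
                rw [hxd] at hd1
                omega
              | cons ha r =>
                cases r with
                | nil =>
                  have hxN : x ∈ G.neighborSet v1 := ha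
                  rw [hN1] at hxN
                  exact hxN
                | cons hb r2 =>
                  cases r2 with
                  | cons hc r3 => simp [Walk.length_cons] at hql
                  | nil =>
                    exfalso
                    rename_i aa
                    have haN : aa ∈ G.neighborSet v1 := ha
                    rw [hN1] at haN
                    have hxa : x ≠ v1 := by
                      have := hqp.support_nodup
                      simp only [Walk.support_cons, Walk.support_nil,
                        List.nodup_cons, List.mem_cons, List.mem_singleton,
                        List.not_mem_nil, or_false, not_or] at this
                      exact fun h => this.1.2 h.symm
                    have hda : (G.neighborSet aa).ncard = 1 := by
                      rcases haN with rfl | rfl | rfl <;> assumption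
                    have hxm : x ∈ G.neighborSet aa := hb
                    rw [ncard1_eq hda (show v1 ∈ G.neighborSet aa from ha.symm)] at hxm
                    exact hxa (Set.mem_singleton_iff.mp hxm)
            have hle := Set.ncard_le_ncard hsub (Set.toFinite _)
            have h3' : ({v0, vk, u3} : Set V).ncard ≤ 3 := by
              calc ({v0, vk, u3} : Set V).ncard
                  ≤ ({vk, u3} : Set V).ncard + 1 := Set.ncard_insert_le _ _
                _ ≤ ({u3} : Set V).ncard + 1 + 1 := by
                    exact Nat.add_le_add_right (Set.ncard_insert_le _ _) 1
                _ ≤ 3 := by simp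
            omega
  -- main case: k ≥ 3
  rw [← hPlen] at hk3
  cases P with
  | nil => simp at hk3
  | cons h01 P1 =>
  rename_i v1
  cases P1 with
  | nil => simp at hk3
  | cons h12 P2 =>
  rename_i v2
  cases P2 with
  | nil => simp [Walk.length_cons] at hk3
  | cons h23 P3 =>
  rename_i v3
  -- basic path facts
  have hP1 : (Walk.cons h12 (Walk.cons h23 P3)).IsPath := hP.of_cons
  have hP2 : (Walk.cons h23 P3).IsPath := hP1.of_cons
  have hP3 : P3.IsPath := hP2.of_cons
  have hv3P3 : v3 ∈ P3.support := P3.start_mem_support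
  have h0n : v0 ∉ (Walk.cons h12 (Walk.cons h23 P3)).support :=
    ((Walk.cons_isPath_iff _ _).mp hP).2
  have h1n : v1 ∉ (Walk.cons h23 P3).support :=
    ((Walk.cons_isPath_iff _ _).mp hP1).2
  have h2n : v2 ∉ P3.support := ((Walk.cons_isPath_iff _ _).mp hP2).2
  simp only [Walk.support_cons, List.mem_cons, not_or] at h0n h1n
  obtain ⟨h01ne, h02ne, h0P3⟩ := h0n
  obtain ⟨h12ne, h1P3⟩ := h1n
  have h0v3 : v0 ≠ v3 := fun h => h0P3 (h ▸ hv3P3)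
  have h1v3 : v1 ≠ v3 := fun h => h1P3 (h ▸ hv3P3)
  have h2v3 : v2 ≠ v3 := fun h => h2n (h ▸ hv3P3)
  -- the cherry {v0, y} at v1
  have hd1 : (G.neighborSet v1).ncard = 3 := by
    rcases hdeg' h12 with h1 | h3
    · exfalso
      have h2m : v2 ∈ G.neighborSet v1 := h12
      rw [ncard1_eq h1 (show v0 ∈ G.neighborSet v1 from h01.symm)] at h2m
      exact h02ne (Set.mem_singleton_iff.mp h2m).symm
    · exact h3
  obtain ⟨y, hyN, hyv0, hyv2⟩ :=
    ncard3_third hd1 (show v0 ∈ G.neighborSet v1 from h01.symm)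
      (show v2 ∈ G.neighborSet v1 from h12)
  have hN1 : G.neighborSet v1 = {v0, v2, y} :=
    ncard3_eq (Set.toFinite _) hd1 h01.symm h12 hyN h02ne hyv0.symm hyv2.symm
  have hyadj : G.Adj v1 y := hyN
  have hyP : y ∉ (Walk.cons h01 (Walk.cons h12 (Walk.cons h23 P3))).support := by
    intro hmem
    rw [Walk.support_cons] at hmem
    rcases List.mem_cons.mp hmem with heq | hmem1
    · exact hyv0 heq
    · exact hyv2 (key_lemma hac h12 (Walk.cons h23 P3) hP1 hyadj hmem1)
  have hyP1 : y ∉ (Walk.cons h12 (Walk.cons h23 P3)).support := by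
    intro hm
    exact hyP (by rw [Walk.support_cons]; exact List.mem_cons_of_mem _ hm)
  have hdy : (G.neighborSet y).ncard = 1 := by
    have hQ : (Walk.cons hyadj.symm (Walk.cons h12 (Walk.cons h23 P3))).IsPath :=
      (Walk.cons_isPath_iff _ _).mpr ⟨hP1, hyP1⟩
    exact hend _ hQ (by simp [Walk.length_cons])
  have hyv3 : y ≠ v3 := fun h => hyP (by
    rw [h, Walk.support_cons, Walk.support_cons, Walk.support_cons]
    exact List.mem_cons_of_mem _ (List.mem_cons_of_mem _ (List.mem_cons_of_mem _ hv3P3)))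
  -- the third neighbour c of v2
  have hd2 : (G.neighborSet v2).ncard = 3 := by
    rcases hdeg' h23 with h1 | h3
    · exfalso
      have h3m : v3 ∈ G.neighborSet v2 := h23
      rw [ncard1_eq h1 (show v1 ∈ G.neighborSet v2 from h12.symm)] at h3m
      exact h1v3 (Set.mem_singleton_iff.mp h3m).symm
    · exact h3
  obtain ⟨c, hcN, hcv1, hcv3⟩ :=
    ncard3_third hd2 (show v1 ∈ G.neighborSet v2 from h12.symm)
      (show v3 ∈ G.neighborSet v2 from h23)
  have hN2 : G.neighborSet v2 = {v1, v3, c} :=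
    ncard3_eq (Set.toFinite _) hd2 h12.symm h23 hcN h1v3 hcv1.symm hcv3.symm
  have hcadj : G.Adj v2 c := hcN
  have hcv2 : c ≠ v2 := hcadj.ne'
  have hcP : c ∉ (Walk.cons h01 (Walk.cons h12 (Walk.cons h23 P3))).support := by
    intro hmem
    rw [Walk.support_cons] at hmem
    rcases List.mem_cons.mp hmem with heq | hmem1
    · -- c = v0
      have : v2 = v1 := key_lemma hac h01 (Walk.cons h12 (Walk.cons h23 P3)) hP
        (heq ▸ hcadj.symm)
        (by simp [Walk.support_cons])
      exact h12ne this.symm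
    · rw [Walk.support_cons] at hmem1
      rcases List.mem_cons.mp hmem1 with heq | hmem2
      · exact hcv1 heq
      · rw [Walk.support_cons] at hmem2
        rcases List.mem_cons.mp hmem2 with heq | hmem3
        · exact hcv2 heq
        · exact hcv3 (key_lemma hac h23 P3 hP2 hcadj
            (by rw [Walk.support_cons]; exact List.mem_cons_of_mem _ hmem3))
  have hcv0 : c ≠ v0 := fun h => hcP (by rw [h]; exact Walk.start_mem_support _)
  have hcy : c ≠ y := by
    intro heq
    have h2m : v2 ∈ G.neighborSet y := heq ▸ hcadj.symm
    rw [ncard1_eq hdy (show v1 ∈ G.neighborSet y from hyadj.symm)] at h2m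
    exact h12ne (Set.mem_singleton_iff.mp h2m).symm
  -- leaf memberships and neighbourhoods
  have hv0X : v0 ∈ X := hmemX v0 (T.support h01).1 hdv0
  have hyX : y ∈ X := hmemX y (T.support hyadj).2 hdy
  have hv0y : v0 ≠ y := fun h => hyv0 h.symm
  have cherry1 : T.IsCherryOf v0 y := ⟨hv0y, v1, h01, hyadj.symm⟩
  have hN0 : G.neighborSet v0 = {v1} :=
    ncard1_eq hdv0 (show v1 ∈ G.neighborSet v0 from h01)
  have hNy : G.neighborSet y = {v1} :=
    ncard1_eq hdy (show v1 ∈ G.neighborSet y from hyadj.symm)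
  -- the pruned graph
  have hG'adj : ∀ {p q : V}, G.Adj p q → p ≠ v3 → q ≠ v3 →
      (G.deleteEdges {s(v2, v3)}).Adj p q := by
    intro p q h hp hq
    rw [SimpleGraph.deleteEdges_adj]
    refine ⟨h, ?_⟩
    rw [Set.mem_singleton_iff]
    intro hs
    rcases Sym2.eq_iff.mp hs with ⟨-, h2⟩ | ⟨h1, -⟩
    · exact hq h2
    · exact hp h1
  have hr1 : (G.deleteEdges {s(v2, v3)}).Adj v2 v1 := hG'adj h12.symm h2v3 h1v3
  have hr0 : (G.deleteEdges {s(v2, v3)}).Adj v1 v0 := hG'adj h01.symm h1v3 h0v3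
  have hry : (G.deleteEdges {s(v2, v3)}).Adj v1 y := hG'adj hyadj h1v3 hyv3
  have hrc : (G.deleteEdges {s(v2, v3)}).Adj v2 c := hG'adj hcadj h2v3 hcv3
  rcases hdeg c (T.support hcadj).2 with hdc | hdc
  · -- Case A : c is a leaf, pendant subtree on three leaves
    have hdc' : (G.neighborSet c).ncard = 1 := hdc
    have hNc : G.neighborSet c = {v2} :=
      ncard1_eq hdc' (show v2 ∈ G.neighborSet c from hcadj.symm)
    have hcX : c ∈ X := hmemX c (T.support hcadj).2 hdc'
    left
    refine ⟨v0, y, c, hv0X, hyX, hcX, hv0y, hcv0.symm, hcy.symm, ?_, cherry1⟩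
    refine ⟨v2, v3, h23, ?_⟩
    have hclosed : ∀ a ∈ ({v2, v1, v0, y, c} : Set V), ∀ b,
        (G.deleteEdges {s(v2, v3)}).Adj a b → b ∈ ({v2, v1, v0, y, c} : Set V) := by
      intro a ha b hb
      rw [SimpleGraph.deleteEdges_adj] at hb
      obtain ⟨hadj, hne⟩ := hb
      simp only [Set.mem_insert_iff, Set.mem_singleton_iff] at ha ⊢
      rcases ha with ha | ha | ha | ha | ha
      all_goals rw [ha] at hadj hne
      · have hm : b ∈ G.neighborSet v2 := hadj
        rw [hN2] at hm
        simp only [Set.mem_insert_iff, Set.mem_singleton_iff] at hm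
        rcases hm with rfl | rfl | rfl
        · tauto
        · exact absurd (Set.mem_singleton _) hne
        · tauto
      · have hm : b ∈ G.neighborSet v1 := hadj
        rw [hN1] at hm
        simp only [Set.mem_insert_iff, Set.mem_singleton_iff] at hm
        tauto
      · have hm : b ∈ G.neighborSet v0 := hadj
        rw [hN0] at hm
        simp only [Set.mem_singleton_iff] at hm
        tauto
      · have hm : b ∈ G.neighborSet y := hadj
        rw [hNy] at hm
        simp only [Set.mem_singleton_iff] at hm
        tauto
      · have hm : b ∈ G.neighborSet c := hadj
        rw [hNc] at hm
        simp only [Set.mem_singleton_iff] at hm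
        tauto
    intro x hx
    constructor
    · intro hxS
      simp only [Set.mem_insert_iff, Set.mem_singleton_iff] at hxS
      rcases hxS with h | h | h
      · rw [h]; exact ⟨Walk.cons hr1 (Walk.cons hr0 Walk.nil)⟩
      · rw [h]; exact ⟨Walk.cons hr1 (Walk.cons hry Walk.nil)⟩
      · rw [h]; exact ⟨Walk.cons hrc Walk.nil⟩
    · intro hreach'
      obtain ⟨wlk⟩ := hreach'
      have hxA := reach_mem hclosed (show v2 ∈ ({v2, v1, v0, y, c} : Set V) by
        exact Set.mem_insert _ _) wlk
      have hxd := (hXmem x hx).2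
      simp only [Set.mem_insert_iff, Set.mem_singleton_iff] at hxA ⊢
      clear wlk
      rcases hxA with h | h | h | h | h
      · rw [h] at hxd; rw [hxd] at hd2; omega
      · rw [h] at hxd; rw [hxd] at hd1; omega
      · exact Or.inl h
      · exact Or.inr (Or.inl h)
      · exact Or.inr (Or.inr h)
  · -- Case B : c is internal, pendant subtree on four leaves
    have hdc' : (G.neighborSet c).ncard = 3 := hdc
    obtain ⟨w, hwN, hwv2⟩ :=
      ncard3_second hdc' (show v2 ∈ G.neighborSet c from hcadj.symm)
    obtain ⟨z, hzN, hzv2, hzw⟩ :=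
      ncard3_third hdc' (show v2 ∈ G.neighborSet c from hcadj.symm) hwN
    have hNc : G.neighborSet c = {v2, w, z} :=
      ncard3_eq (Set.toFinite _) hdc' hcadj.symm hwN hzN hwv2.symm hzv2.symm hzw.symm
    have hwadj : G.Adj c w := hwN
    have hzadj : G.Adj c z := hzN
    have hwc : w ≠ c := hwadj.ne'
    have hzc : z ≠ c := hzadj.ne'
    have hcP2 : c ∉ (Walk.cons h23 P3).support := by
      intro hm
      exact hcP (by
        rw [Walk.support_cons, Walk.support_cons]
        exact List.mem_cons_of_mem _ (List.mem_cons_of_mem _ hm))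
    have hPc : (Walk.cons hcadj.symm (Walk.cons h23 P3)).IsPath :=
      (Walk.cons_isPath_iff _ _).mpr ⟨hP2, hcP2⟩
    have hnotP : ∀ {u : V}, G.Adj c u → u ≠ v2 →
        u ∉ (Walk.cons h01 (Walk.cons h12 (Walk.cons h23 P3))).support := by
      intro u huadj huv2 hmem
      rw [Walk.support_cons] at hmem
      rcases List.mem_cons.mp hmem with heq | hmem1
      · -- u = v0
        have hm : c ∈ G.neighborSet v0 := heq ▸ huadj.symm
        rw [hN0] at hm
        exact hcv1 (Set.mem_singleton_iff.mp hm)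
      · rw [Walk.support_cons] at hmem1
        rcases List.mem_cons.mp hmem1 with heq | hmem2
        · -- u = v1
          have hm : c ∈ G.neighborSet v1 := heq ▸ huadj.symm
          rw [hN1] at hm
          simp only [Set.mem_insert_iff, Set.mem_singleton_iff] at hm
          rcases hm with rfl | rfl | rfl
          · exact hcv0 rfl
          · exact hcv2 rfl
          · exact hcy rfl
        · -- u in support of (cons h23 P3)
          exact huv2 (key_lemma hac hcadj.symm (Walk.cons h23 P3) hPc huadj
            (by rw [Walk.support_cons]; exact List.mem_cons_of_mem _ hmem2))
    have hwP : w ∉ (Walk.cons h01 (Walk.cons h12 (Walk.cons h23 P3))).support :=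
      hnotP hwadj hwv2
    have hzP : z ∉ (Walk.cons h01 (Walk.cons h12 (Walk.cons h23 P3))).support :=
      hnotP hzadj hzv2
    have hsupsub : ∀ {u : V}, u ∈ (Walk.cons h23 P3).support →
        u ∈ (Walk.cons h01 (Walk.cons h12 (Walk.cons h23 P3))).support := by
      intro u hm
      rw [Walk.support_cons, Walk.support_cons]
      exact List.mem_cons_of_mem _ (List.mem_cons_of_mem _ hm)
    have hdw : (G.neighborSet w).ncard = 1 := by
      have hQ : (Walk.cons hwadj.symm (Walk.cons hcadj.symm (Walk.cons h23 P3))).IsPath := by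
        refine (Walk.cons_isPath_iff _ _).mpr ⟨hPc, ?_⟩
        rw [Walk.support_cons]
        intro hm
        rcases List.mem_cons.mp hm with heq | hm2
        · exact hwc heq
        · exact hwP (hsupsub hm2)
      exact hend _ hQ (by simp [Walk.length_cons])
    have hdz : (G.neighborSet z).ncard = 1 := by
      have hQ : (Walk.cons hzadj.symm (Walk.cons hcadj.symm (Walk.cons h23 P3))).IsPath := by
        refine (Walk.cons_isPath_iff _ _).mpr ⟨hPc, ?_⟩
        rw [Walk.support_cons]
        intro hm
        rcases List.mem_cons.mp hm with heq | hm2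
        · exact hzc heq
        · exact hzP (hsupsub hm2)
      exact hend _ hQ (by simp [Walk.length_cons])
    have hNw : G.neighborSet w = {c} :=
      ncard1_eq hdw (show c ∈ G.neighborSet w from hwadj.symm)
    have hNz : G.neighborSet z = {c} :=
      ncard1_eq hdz (show c ∈ G.neighborSet z from hzadj.symm)
    have hwv3 : w ≠ v3 := fun h => hwP (by
      rw [h]; exact hsupsub (by rw [Walk.support_cons]; exact List.mem_cons_of_mem _ hv3P3))
    have hzv3 : z ≠ v3 := fun h => hzP (by
      rw [h]; exact hsupsub (by rw [Walk.support_cons]; exact List.mem_cons_of_mem _ hv3P3))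
    have hwv0 : w ≠ v0 := fun h => hwP (by rw [h]; exact Walk.start_mem_support _)
    have hzv0 : z ≠ v0 := fun h => hzP (by rw [h]; exact Walk.start_mem_support _)
    have hwy : w ≠ y := by
      intro heq
      have hm : c ∈ G.neighborSet y := heq ▸ hwadj.symm
      rw [hNy] at hm
      exact hcv1 (Set.mem_singleton_iff.mp hm)
    have hzy : z ≠ y := by
      intro heq
      have hm : c ∈ G.neighborSet y := heq ▸ hzadj.symm
      rw [hNy] at hm
      exact hcv1 (Set.mem_singleton_iff.mp hm)
    have hwX : w ∈ X := hmemX w (T.support hwadj).2 hdw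
    have hzX : z ∈ X := hmemX z (T.support hzadj).2 hdz
    have cherry2 : T.IsCherryOf w z := ⟨fun h => hzw h.symm, c, hwadj.symm, hzadj.symm⟩
    have hrw : (G.deleteEdges {s(v2, v3)}).Adj c w := hG'adj hwadj hcv3 hwv3
    have hrz : (G.deleteEdges {s(v2, v3)}).Adj c z := hG'adj hzadj hcv3 hzv3
    right
    refine ⟨w, v0, y, z, hwX, hv0X, hyX, hzX, hwv0, hwy, fun h => hzw h.symm,
      hv0y, fun h => hzv0 h.symm, fun h => hzy h.symm, ?_, cherry1, cherry2⟩
    refine ⟨v2, v3, h23, ?_⟩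
    have hclosed : ∀ a ∈ ({v2, v1, v0, y, c, w, z} : Set V), ∀ b,
        (G.deleteEdges {s(v2, v3)}).Adj a b →
        b ∈ ({v2, v1, v0, y, c, w, z} : Set V) := by
      intro a ha b hb
      rw [SimpleGraph.deleteEdges_adj] at hb
      obtain ⟨hadj, hne⟩ := hb
      simp only [Set.mem_insert_iff, Set.mem_singleton_iff] at ha ⊢
      rcases ha with ha | ha | ha | ha | ha | ha | ha
      all_goals rw [ha] at hadj hne
      · have hm : b ∈ G.neighborSet v2 := hadj
        rw [hN2] at hm
        simp only [Set.mem_insert_iff, Set.mem_singleton_iff] at hm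
        rcases hm with rfl | rfl | rfl
        · tauto
        · exact absurd (Set.mem_singleton _) hne
        · tauto
      · have hm : b ∈ G.neighborSet v1 := hadj
        rw [hN1] at hm
        simp only [Set.mem_insert_iff, Set.mem_singleton_iff] at hm
        tauto
      · have hm : b ∈ G.neighborSet v0 := hadj
        rw [hN0] at hm
        simp only [Set.mem_singleton_iff] at hm
        tauto
      · have hm : b ∈ G.neighborSet y := hadj
        rw [hNy] at hm
        simp only [Set.mem_singleton_iff] at hm
        tauto
      · have hm : b ∈ G.neighborSet c := hadj
        rw [hNc] at hm
        simp only [Set.mem_insert_iff, Set.mem_singleton_iff] at hm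
        tauto
      · have hm : b ∈ G.neighborSet w := hadj
        rw [hNw] at hm
        simp only [Set.mem_singleton_iff] at hm
        tauto
      · have hm : b ∈ G.neighborSet z := hadj
        rw [hNz] at hm
        simp only [Set.mem_singleton_iff] at hm
        tauto
    intro x hx
    constructor
    · intro hxS
      simp only [Set.mem_insert_iff, Set.mem_singleton_iff] at hxS
      rcases hxS with h | h | h | h
      · rw [h]; exact ⟨Walk.cons hrc (Walk.cons hrw Walk.nil)⟩
      · rw [h]; exact ⟨Walk.cons hr1 (Walk.cons hr0 Walk.nil)⟩
      · rw [h]; exact ⟨Walk.cons hr1 (Walk.cons hry Walk.nil)⟩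
      · rw [h]; exact ⟨Walk.cons hrc (Walk.cons hrz Walk.nil)⟩
    · intro hreach'
      obtain ⟨wlk⟩ := hreach'
      have hxA := reach_mem hclosed (show v2 ∈ ({v2, v1, v0, y, c, w, z} : Set V) by
        exact Set.mem_insert _ _) wlk
      have hxd := (hXmem x hx).2
      simp only [Set.mem_insert_iff, Set.mem_singleton_iff] at hxA ⊢
      clear wlk
      rcases hxA with h | h | h | h | h | h | h
      · rw [h] at hxd; rw [hxd] at hd2; omega
      · rw [h] at hxd; rw [hxd] at hd1; omega
      · exact Or.inr (Or.inl h)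
      · exact Or.inr (Or.inr (Or.inl h))
      · rw [h] at hxd; rw [hxd] at hdc'; omega
      · exact Or.inl h
      · exact Or.inr (Or.inr (Or.inr h))
end
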